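/- arXiv:2210.09095 — 9 statements merged into one kernel-verified Lean document; each statement's English description precedes it below -/
import Mathlib

section
/- A sequent φ⊢χ of Belnap–Dunn logic is provable in the calculus R_fde if and only if it is valid on every Belnap–Dunn model (frame semantics). -/
/-- Formulas of Belnap–Dunn logic. -/
inductive BDForm : Type
  | atom : ℕ → BDForm
  | neg  : BDForm → BDForm
  | and  : BDForm → BDForm → BDForm
  | or   : BDForm → BDForm → BDForm

/-- Frame (Kripke-style) semantics of BD: positive and negative extensions of a formula
in a BD model `⟨W, v⁺, v⁻⟩`. -/
def BDsem {W : Type} (vp vm : ℕ → Set W) : BDForm → Set W × Set W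
  | .atom n => (vp n, vm n)
  | .neg φ => ((BDsem vp vm φ).2, (BDsem vp vm φ).1)
  | .and φ ψ => ((BDsem vp vm φ).1 ∩ (BDsem vp vm ψ).1, (BDsem vp vm φ).2 ∪ (BDsem vp vm ψ).2)
  | .or φ ψ => ((BDsem vp vm φ).1 ∪ (BDsem vp vm ψ).1, (BDsem vp vm φ).2 ∩ (BDsem vp vm ψ).2)

/-- A sequent `φ ⊢ χ` is valid on a BD model iff positive support of `φ` implies
positive support of `χ`, and negative support of `χ` implies negative support of `φ`. -/
def BDValidOn {W : Type} (vp vm : ℕ → Set W) (φ χ : BDForm) : Prop :=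
  (BDsem vp vm φ).1 ⊆ (BDsem vp vm χ).1 ∧ (BDsem vp vm χ).2 ⊆ (BDsem vp vm φ).2

/-- The calculus `R_fde`: axiomatic sequents, transitivity of `⊢`, `∨`-elimination
and `∧`-introduction. -/
inductive Rfde : BDForm → BDForm → Prop
  | andE1 (φ χ : BDForm) : Rfde (φ.and χ) φ
  | andE2 (φ χ : BDForm) : Rfde (φ.and χ) χ
  | orI1 (φ χ : BDForm) : Rfde φ (φ.or χ)
  | orI2 (φ χ : BDForm) : Rfde χ (φ.or χ)
  | negAnd1 (φ χ : BDForm) : Rfde (φ.and χ).neg ((φ.neg).or χ.neg)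
  | negAnd2 (φ χ : BDForm) : Rfde ((φ.neg).or χ.neg) (φ.and χ).neg
  | negOr1 (φ χ : BDForm) : Rfde (φ.or χ).neg ((φ.neg).and χ.neg)
  | negOr2 (φ χ : BDForm) : Rfde ((φ.neg).and χ.neg) (φ.or χ).neg
  | dne (φ : BDForm) : Rfde φ.neg.neg φ
  | dni (φ : BDForm) : Rfde φ φ.neg.neg
  | distrib (φ χ ψ : BDForm) : Rfde (φ.and (χ.or ψ)) ((φ.and χ).or (φ.and ψ))
  | trans {φ χ ψ : BDForm} : Rfde φ χ → Rfde χ ψ → Rfde φ ψ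
  | orE {φ χ ψ : BDForm} : Rfde φ ψ → Rfde χ ψ → Rfde (φ.or χ) ψ
  | andI {φ χ ψ : BDForm} : Rfde φ χ → Rfde φ ψ → Rfde φ (χ.and ψ)

theorem Rfde.rfl' (φ : BDForm) : Rfde φ φ := .trans (.dni φ) (.dne φ)

/-- Soundness of a single rule application. -/
theorem Rfde_sound {W : Type} (vp vm : ℕ → Set W) {φ χ : BDForm} (h : Rfde φ χ) :
    BDValidOn vp vm φ χ := by
  induction h with
  | trans _ _ ih1 ih2 =>
      exact ⟨ih1.1.trans ih2.1, ih2.2.trans ih1.2⟩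
  | orE _ _ ih1 ih2 =>
      refine ⟨?_, ?_⟩ <;> intro w hw
      · rcases hw with h | h
        exacts [ih1.1 h, ih2.1 h]
      · exact ⟨ih1.2 hw, ih2.2 hw⟩
  | andI _ _ ih1 ih2 =>
      refine ⟨?_, ?_⟩ <;> intro w hw
      · exact ⟨ih1.1 hw, ih2.1 hw⟩
      · rcases hw with h | h
        exacts [ih1.2 h, ih2.2 h]
  | _ =>
      constructor <;> intro w hw <;> simp_all [BDsem] <;> tauto

/-- Deductively closed and conjunction-closed sets of formulas. -/
def IsTheory (Γ : Set BDForm) : Prop :=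
  (∀ φ ∈ Γ, ∀ ψ, Rfde φ ψ → ψ ∈ Γ) ∧ (∀ φ ∈ Γ, ∀ ψ ∈ Γ, φ.and ψ ∈ Γ)

def IsPrime (Γ : Set BDForm) : Prop := ∀ φ ψ, φ.or ψ ∈ Γ → φ ∈ Γ ∨ ψ ∈ Γ

/-- Canonical model worlds. -/
abbrev CanW : Type := {Γ : Set BDForm // IsTheory Γ ∧ IsPrime Γ}

def canVp (n : ℕ) : Set CanW := {Γ | BDForm.atom n ∈ Γ.1}
def canVm (n : ℕ) : Set CanW := {Γ | (BDForm.atom n).neg ∈ Γ.1}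

theorem truth_lemma (ψ : BDForm) (Γ : CanW) :
    (Γ ∈ (BDsem canVp canVm ψ).1 ↔ ψ ∈ Γ.1) ∧
    (Γ ∈ (BDsem canVp canVm ψ).2 ↔ ψ.neg ∈ Γ.1) := by
  obtain ⟨Γs, ⟨hded, hand⟩, hprime⟩ := Γ
  induction ψ with
  | atom n => exact ⟨Iff.rfl, Iff.rfl⟩
  | neg φ ih =>
      refine ⟨ih.2, ih.1.trans ⟨fun h => hded _ h _ (.dni φ), fun h => hded _ h _ (.dne φ)⟩⟩
  | and φ χ ihφ ihχ =>
      constructor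
      · constructor
        · rintro ⟨h1, h2⟩
          exact hand _ (ihφ.1.mp h1) _ (ihχ.1.mp h2)
        · intro h
          exact ⟨ihφ.1.mpr (hded _ h _ (.andE1 φ χ)), ihχ.1.mpr (hded _ h _ (.andE2 φ χ))⟩
      · constructor
        · rintro (h | h)
          · exact hded _ (ihφ.2.mp h) _ (.trans (.orI1 _ _) (.negAnd2 φ χ))
          · exact hded _ (ihχ.2.mp h) _ (.trans (.orI2 _ _) (.negAnd2 φ χ))
        · intro h
          rcases hprime _ _ (hded _ h _ (.negAnd1 φ χ)) with h | h
          · exact Or.inl (ihφ.2.mpr h)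
          · exact Or.inr (ihχ.2.mpr h)
  | or φ χ ihφ ihχ =>
      constructor
      · constructor
        · rintro (h | h)
          · exact hded _ (ihφ.1.mp h) _ (.orI1 φ χ)
          · exact hded _ (ihχ.1.mp h) _ (.orI2 φ χ)
        · intro h
          rcases hprime _ _ h with h | h
          · exact Or.inl (ihφ.1.mpr h)
          · exact Or.inr (ihχ.1.mpr h)
      · constructor
        · rintro ⟨h1, h2⟩
          exact hded _ (hand _ (ihφ.2.mp h1) _ (ihχ.2.mp h2)) _ (.negOr2 φ χ)
        · intro h
          have h' := hded _ h _ (.negOr1 φ χ)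
          exact ⟨ihφ.2.mpr (hded _ h' _ (.andE1 _ _)), ihχ.2.mpr (hded _ h' _ (.andE2 _ _))⟩

/-- Lindenbaum: if `χ` is not derivable from `φ`, there is a prime theory containing `φ`
but not `χ`. -/
theorem lindenbaum {φ χ : BDForm} (h : ¬ Rfde φ χ) :
    ∃ Γ : Set BDForm, IsTheory Γ ∧ IsPrime Γ ∧ φ ∈ Γ ∧ χ ∉ Γ := by
  set S : Set (Set BDForm) := {Γ | IsTheory Γ ∧ φ ∈ Γ ∧ χ ∉ Γ} with hS
  have h0 : {ψ | Rfde φ ψ} ∈ S := by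
    refine ⟨⟨fun a ha b hb => ha.trans hb, fun a ha b hb => ha.andI hb⟩, Rfde.rfl' φ, h⟩
  obtain ⟨Γ, -, hΓmax⟩ := zorn_subset_nonempty S (fun c hcS hc hcne => by
    refine ⟨⋃₀ c, ⟨⟨?_, ?_⟩, ?_, ?_⟩, fun s hs => Set.subset_sUnion_of_mem hs⟩
    · rintro a ⟨t, ht, hat⟩ b hab
      exact ⟨t, ht, (hcS ht).1.1 a hat b hab⟩
    · rintro a ⟨t, ht, hat⟩ b ⟨u, hu, hbu⟩
      rcases hc.total ht hu with htu | hut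
      · exact ⟨u, hu, (hcS hu).1.2 a (htu hat) b hbu⟩
      · exact ⟨t, ht, (hcS ht).1.2 a hat b (hut hbu)⟩
    · obtain ⟨t, ht⟩ := hcne
      exact ⟨t, ht, (hcS ht).2.1⟩
    · rintro ⟨t, ht, hχt⟩
      exact (hcS ht).2.2 hχt) _ h0
  obtain ⟨⟨hded, hand⟩, hφΓ, hχΓ⟩ := hΓmax.prop
  refine ⟨Γ, ⟨hded, hand⟩, ?_, hφΓ, hχΓ⟩
  -- primeness from maximality
  intro α β hαβ
  by_contra hcon
  push_neg at hcon
  obtain ⟨hα, hβ⟩ := hcon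
  -- closure of Γ ∪ {α}
  have key : ∀ δ : BDForm, δ ∉ Γ →
      ∃ γ ∈ Γ, Rfde (γ.and δ) χ := by
    intro δ hδ
    by_contra hk
    push_neg at hk
    set Δ : Set BDForm := {ψ | ∃ γ ∈ Γ, Rfde (γ.and δ) ψ} with hΔ
    have hΔS : Δ ∈ S := by
      refine ⟨⟨?_, ?_⟩, ⟨φ, hφΓ, .andE1 _ _⟩, ?_⟩
      · rintro a ⟨γ, hγ, hd⟩ b hab
        exact ⟨γ, hγ, hd.trans hab⟩
      · rintro a ⟨γ₁, hγ₁, hd₁⟩ b ⟨γ₂, hγ₂, hd₂⟩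
        refine ⟨γ₁.and γ₂, hand _ hγ₁ _ hγ₂, .andI (.trans ?_ hd₁) (.trans ?_ hd₂)⟩
        · exact .andI (.trans (.andE1 _ _) (.andE1 _ _)) (.andE2 _ _)
        · exact .andI (.trans (.andE1 _ _) (.andE2 _ _)) (.andE2 _ _)
      · rintro ⟨γ, hγ, hd⟩
        exact hk γ hγ hd
    have hsub : Γ ⊆ Δ := fun a ha => ⟨a, ha, .andE1 _ _⟩
    exact hδ (hΓmax.2 hΔS hsub ⟨φ, hφΓ, .andE2 _ _⟩)
  obtain ⟨γ₁, hγ₁, hd₁⟩ := key α hα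
  obtain ⟨γ₂, hγ₂, hd₂⟩ := key β hβ
  set γ := γ₁.and γ₂ with hγ
  have hγΓ : γ ∈ Γ := hand _ hγ₁ _ hγ₂
  have d1 : Rfde (γ.and α) χ :=
    .trans (.andI (.trans (.andE1 _ _) (.andE1 _ _)) (.andE2 _ _)) hd₁
  have d2 : Rfde (γ.and β) χ :=
    .trans (.andI (.trans (.andE1 _ _) (.andE2 _ _)) (.andE2 _ _)) hd₂
  have : Rfde (γ.and (α.or β)) χ := .trans (.distrib γ α β) (.orE d1 d2)
  exact hχΓ (hded _ (hand _ hγΓ _ hαβ) _ this)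

/-- a BD sequent `φ ⊢ χ` is provable in `R_fde` iff it is valid on
every Belnap–Dunn model. -/
theorem Rfde_provable_iff_frame_valid (φ χ : BDForm) :
    Rfde φ χ ↔ (∀ (W : Type) (_ : Nonempty W) (vp vm : ℕ → Set W), BDValidOn vp vm φ χ) := by
  constructor
  · intro h W _ vp vm
    exact Rfde_sound vp vm h
  · intro hval
    by_contra h
    obtain ⟨Γ, hth, hpr, hφ, hχ⟩ := lindenbaum h
    have hW : Nonempty CanW := ⟨⟨Γ, hth, hpr⟩⟩
    have := (hval CanW hW canVp canVm).1
    have hmem : (⟨Γ, hth, hpr⟩ : CanW) ∈ (BDsem canVp canVm φ).1 :=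
      (truth_lemma φ _).1.mpr hφ
    exact hχ ((truth_lemma χ _).1.mp (this hmem))
end

section
/- For any uncertainty frame F = ⟨W, μ⟩: F validates the formula 1compl, i.e., △Bp ↔_G ~_G B~p, if and only if for every X ⊆ W, μ(X) = 1 ⟺ μ(W∖X) = 0. -/
/-- Classical propositional formulas (over `~` and `∧`). -/
inductive CPForm : Type
  | atom : ℕ → CPForm
  | neg  : CPForm → CPForm
  | and  : CPForm → CPForm → CPForm

/-- Boolean evaluation of classical formulas. -/
def cpeval (v : ℕ → Bool) : CPForm → Bool
  | .atom n => v n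
  | .neg φ => !(cpeval v φ)
  | .and φ ψ => cpeval v φ && cpeval v ψ

/-- `φ` is a classical tautology. -/
def CPTaut (φ : CPForm) : Prop := ∀ v : ℕ → Bool, cpeval v φ = true

/-- The extension `‖φ‖` of a classical formula in a model with valuation `v`. -/
def cpset {W : Type} (v : ℕ → Set W) : CPForm → Set W
  | .atom n => v n
  | .neg φ => (cpset v φ)ᶜ
  | .and φ ψ => cpset v φ ∩ cpset v ψ

/-- Defined classical implication `φ ⊃ ψ := ~(φ ∧ ~ψ)`. -/
def cpImp (φ ψ : CPForm) : CPForm := (φ.and ψ.neg).neg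

/-- Defined classical disjunction `φ ∨ ψ := ~(~φ ∧ ~ψ)`. -/
def cpOr (φ ψ : CPForm) : CPForm := ((φ.neg).and ψ.neg).neg

/-- A classical contradiction `p ∧ ~p`. -/
def cpBot : CPForm := (CPForm.atom 0).and (CPForm.atom 0).neg

/-- A classical tautology `~(p ∧ ~p)`. -/
def cpTop : CPForm := cpBot.neg

/-- Formulas of the language `L_QG`: atoms `B φ` for classical `φ`,
closed under `∧`, `∨`, `→_G`, `⤙_G`. -/
inductive QGForm : Type
  | bel   : CPForm → QGForm
  | and   : QGForm → QGForm → QGForm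
  | or    : QGForm → QGForm → QGForm
  | imp   : QGForm → QGForm → QGForm
  | coimp : QGForm → QGForm → QGForm

/-- Gödel implication on `[0,1] ⊆ ℝ`. -/
noncomputable def gimp (a b : ℝ) : ℝ := if a ≤ b then 1 else b

/-- Gödel co-implication on `[0,1] ⊆ ℝ`. -/
noncomputable def gcoimp (a b : ℝ) : ℝ := if a ≤ b then 0 else a

/-- The bi-Gödel valuation of `L_QG` formulas in a QG model given by measure `μ`
and classical valuation `v`: `e(Bφ) = μ(‖φ‖)`. -/
noncomputable def qgeval {W : Type} (μ : Set W → ℝ) (v : ℕ → Set W) : QGForm → ℝ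
  | .bel φ => μ (cpset v φ)
  | .and α β => min (qgeval μ v α) (qgeval μ v β)
  | .or α β => max (qgeval μ v α) (qgeval μ v β)
  | .imp α β => gimp (qgeval μ v α) (qgeval μ v β)
  | .coimp α β => gcoimp (qgeval μ v α) (qgeval μ v β)

/-- `μ` is an uncertainty measure on `W`: `[0,1]`-valued, monotone w.r.t. `⊆`,
and `μ(W) > μ(∅)`. -/
def IsUncertainty {W : Type} (μ : Set W → ℝ) : Prop :=
  (∀ X : Set W, μ X ∈ Set.Icc (0:ℝ) 1) ∧ Monotone μ ∧ μ ∅ < μ Set.univ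

/-- `⊤_G` in `L_QG`. -/
def qTop : QGForm := (QGForm.bel (CPForm.atom 0)).imp (QGForm.bel (CPForm.atom 0))
/-- `⊥_G` in `L_QG`. -/
def qBot : QGForm := (QGForm.bel (CPForm.atom 0)).coimp (QGForm.bel (CPForm.atom 0))
/-- Gödel negation `~_G α := α →_G ⊥_G`. -/
def qNot (α : QGForm) : QGForm := α.imp qBot
/-- `△α := (⊤_G ⤙_G α) →_G ⊥_G`. -/
def qDelta (α : QGForm) : QGForm := (qTop.coimp α).imp qBot
/-- `α ↔_G β := (α →_G β) ∧ (β →_G α)`. -/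
def qIff (α β : QGForm) : QGForm := (α.imp β).and (β.imp α)

/-- Validity of an `L_QG` formula on an uncertainty frame `⟨W, μ⟩`:
value `1` in every QG model on the frame. -/
def QGValidOnFrame {W : Type} (μ : Set W → ℝ) (α : QGForm) : Prop :=
  ∀ v : ℕ → Set W, qgeval μ v α = 1

/-- The formula `1compl`: `△Bp ↔_G ~_G B~p`. -/
def oneCompl : QGForm :=
  qIff (qDelta (QGForm.bel (CPForm.atom 0))) (qNot (QGForm.bel (CPForm.atom 0).neg))

/-- an uncertainty frame validates `1compl` iff
`μ(X) = 1 ⟺ μ(W∖X) = 0` for every `X ⊆ W`. -/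
theorem oneCompl_correspondence (W : Type) (_ : Nonempty W) (μ : Set W → ℝ)
    (hμ : IsUncertainty μ) :
    QGValidOnFrame μ oneCompl ↔ ∀ X : Set W, (μ X = 1 ↔ μ Xᶜ = 0) := by
  obtain ⟨hb, -, -⟩ := hμ
  have key : ∀ v : ℕ → Set W,
      qgeval μ v oneCompl = 1 ↔ (μ (v 0) = 1 ↔ μ ((v 0)ᶜ) = 0) := by
    intro v
    have h0 : (0:ℝ) ≤ μ (v 0) := (hb (v 0)).1
    have h1 : μ (v 0) ≤ 1 := (hb (v 0)).2
    have h0c : (0:ℝ) ≤ μ ((v 0)ᶜ) := (hb ((v 0)ᶜ)).1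
    have h1c : μ ((v 0)ᶜ) ≤ 1 := (hb ((v 0)ᶜ)).2
    simp only [oneCompl, qIff, qDelta, qNot, qTop, qBot, qgeval, gimp, gcoimp, cpset]
    by_cases hP : μ (v 0) = 1 <;> by_cases hQ : μ ((v 0)ᶜ) = 0 <;>
      [skip; skip; skip; skip] <;>
      simp only [hP, hQ] <;>
      split_ifs <;>
      simp_all <;>
      first
        | linarith
        | (intro h; exact hP (le_antisymm h1 (by linarith)))
        | (intro h; exact hQ (le_antisymm (by linarith) h0c))
        | (constructor <;> intro h <;> linarith)
        | (exact hP (le_antisymm (hb (v 0)).2 ‹1 ≤ μ (v 0)›))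
        | (exact hQ (le_antisymm ‹μ ((v 0)ᶜ) ≤ 0› (hb ((v 0)ᶜ)).1))
        | (obtain ⟨a, b⟩ := hb (v 0); obtain ⟨c, d⟩ := hb ((v 0)ᶜ)
           split_ifs <;> first | (exfalso; apply hP; linarith) | (exfalso; apply hQ; linarith) | linarith | norm_num)
  constructor
  · intro hval X
    have := (key (fun _ => X)).mp (hval (fun _ => X))
    simpa using this
  · intro hX v
    exact (key v).mpr (hX (v 0))
end

section
/- For any uncertainty frame F = ⟨W, μ⟩: F validates the formula disj+, i.e., (~_G B(p∧p') ∧ ~_G~_G Bp ∧ ~_G~_G Bp') →_G (~_G△(B(p∨p')→_G Bp) ∧ ~_G△(B(p∨p')→_G Bp')), if and only if for all Y, Y' ⊆ W: if μ(Y∩Y') = 0 and μ(Y) > 0 and μ(Y') > 0, then μ(Y∪Y') > μ(Y) and μ(Y∪Y') > μ(Y'). -/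
/-- The atom `p`. -/
def pa : CPForm := CPForm.atom 0
/-- The atom `p'`. -/
def pb : CPForm := CPForm.atom 1

/-- The formula `disj+`:
`(~_G B(p∧p') ∧ ~_G~_G Bp ∧ ~_G~_G Bp') →_G
 (~_G△(B(p∨p')→_G Bp) ∧ ~_G△(B(p∨p')→_G Bp'))`. -/
def disjPlus : QGForm :=
  ((qNot (QGForm.bel (pa.and pb))).and
    ((qNot (qNot (QGForm.bel pa))).and (qNot (qNot (QGForm.bel pb))))).imp
  ((qNot (qDelta ((QGForm.bel (cpOr pa pb)).imp (QGForm.bel pa)))).and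
    (qNot (qDelta ((QGForm.bel (cpOr pa pb)).imp (QGForm.bel pb)))))

lemma gnot' (x : ℝ) : gimp x 0 = if x ≤ 0 then 1 else 0 := by
  unfold gimp; split_ifs <;> rfl

lemma gnotnot' (x : ℝ) : gimp (gimp x 0) 0 = if x ≤ 0 then 0 else 1 := by
  rw [gnot', gnot']; split_ifs <;> norm_num at *

lemma gco1' (u b : ℝ) (hb : b ≤ 1) (hu : u ≤ 1) :
    gcoimp 1 (gimp u b) = if u ≤ b then 0 else 1 := by
  unfold gimp gcoimp; split_ifs <;> norm_num at * <;> linarith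

lemma gimp_self' (x : ℝ) : gimp x x = 1 := by simp [gimp]

lemma gcoimp_self' (x : ℝ) : gcoimp x x = 0 := by simp [gcoimp]

lemma key' (a b c u : ℝ) (ha : 0 ≤ a) (hb : b ≤ 1) (hc : c ≤ 1) (hu : u ≤ 1) :
  (gimp (min (gimp a 0) (min (gimp (gimp b 0) 0) (gimp (gimp c 0) 0)))
        (min (gimp (gimp (gcoimp 1 (gimp u b)) 0) 0)
             (gimp (gimp (gcoimp 1 (gimp u c)) 0) 0)) = 1)
  ↔ ((a = 0 ∧ 0 < b ∧ 0 < c) → (b < u ∧ c < u)) := by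
  rw [gco1' u b hb hu, gco1' u c hc hu, gnotnot', gnotnot', gnot']
  by_cases h1 : a ≤ 0 <;> by_cases h2 : b ≤ 0 <;> by_cases h3 : c ≤ 0 <;>
    by_cases h4 : u ≤ b <;> by_cases h5 : u ≤ c <;>
    · simp only [if_pos, if_neg, *, gnotnot']
      norm_num [gimp]
      first | linarith | (constructor <;> linarith) | (intro _ _ _; exact ⟨by linarith, by linarith⟩) | (exact ⟨by linarith, by linarith, by linarith, fun _ => by linarith⟩)

lemma eval_disjPlus {W : Type} (μ : Set W → ℝ) (hμ : IsUncertainty μ) (v : ℕ → Set W) :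
    qgeval μ v disjPlus = 1 ↔
      ((μ (v 0 ∩ v 1) = 0 ∧ 0 < μ (v 0) ∧ 0 < μ (v 1)) →
        (μ (v 0) < μ (v 0 ∪ v 1) ∧ μ (v 1) < μ (v 0 ∪ v 1))) := by
  have hset : cpset v (cpOr pa pb) = v 0 ∪ v 1 := by
    simp [cpOr, cpset, pa, pb, Set.compl_inter, compl_compl]
  have h : qgeval μ v disjPlus =
      gimp (min (gimp (μ (v 0 ∩ v 1)) 0)
        (min (gimp (gimp (μ (v 0)) 0) 0) (gimp (gimp (μ (v 1)) 0) 0)))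
        (min (gimp (gimp (gcoimp 1 (gimp (μ (v 0 ∪ v 1)) (μ (v 0)))) 0) 0)
             (gimp (gimp (gcoimp 1 (gimp (μ (v 0 ∪ v 1)) (μ (v 1)))) 0) 0)) := by
    simp only [disjPlus, qNot, qDelta, qBot, qTop, qgeval, cpset, pa, pb, hset, Set.compl_inter, compl_compl,
      gimp_self', gcoimp_self']
    rw [show cpOr (CPForm.atom 0) (CPForm.atom 1) = cpOr pa pb from rfl, hset]
  rw [h]
  exact key' _ _ _ _ (hμ.1 _).1 (hμ.1 _).2 (hμ.1 _).2 (hμ.1 _).2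

/-- an uncertainty frame validates `disj+` iff for all `Y, Y' ⊆ W`:
if `μ(Y∩Y') = 0`, `μ(Y) > 0` and `μ(Y') > 0`, then `μ(Y∪Y') > μ(Y)` and
`μ(Y∪Y') > μ(Y')`. -/
theorem disjPlus_correspondence (W : Type) (_ : Nonempty W) (μ : Set W → ℝ)
    (hμ : IsUncertainty μ) :
    QGValidOnFrame μ disjPlus ↔
      ∀ Y Y' : Set W, μ (Y ∩ Y') = 0 → 0 < μ Y → 0 < μ Y' →
        μ Y < μ (Y ∪ Y') ∧ μ Y' < μ (Y ∪ Y') :=  by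
  constructor
  · intro h Y Y' h0 hY hY'
    have := (eval_disjPlus μ hμ (fun n => if n = 0 then Y else Y')).mp
      (h (fun n => if n = 0 then Y else Y'))
    simpa using this ⟨by simpa using h0, by simpa using hY, by simpa using hY'⟩
  · intro h v
    exact (eval_disjPlus μ hμ v).mpr (fun ⟨h0, hb, hc⟩ => h (v 0) (v 1) h0 hb hc)
end

section
/- For any uncertainty frame F = ⟨W, μ⟩: F validates the formula disj0, i.e., ~_G Bp →_G △(Bp' ↔_G B(p∨p')), if and only if for all Y, Y' ⊆ W: μ(Y) = 0 implies μ(Y∪Y') = μ(Y'). -/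
/-- The formula `disj0`: `~_G Bp →_G △(Bp' ↔_G B(p∨p'))`. -/
def disjZero : QGForm :=
  (qNot (QGForm.bel pa)).imp
    (qDelta (qIff (QGForm.bel pb) (QGForm.bel (cpOr pa pb))))


lemma qBot_eval {W : Type} (μ : Set W → ℝ) (v : ℕ → Set W) : qgeval μ v qBot = 0 := by
  simp [qBot, qgeval, gcoimp]

lemma qTop_eval {W : Type} (μ : Set W → ℝ) (v : ℕ → Set W) : qgeval μ v qTop = 1 := by
  simp [qTop, qgeval, gimp]

lemma disjZero_eval_key {W : Type} (μ : Set W → ℝ) (hμ : IsUncertainty μ) (v : ℕ → Set W) :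
    qgeval μ v disjZero = 1 ↔ (μ (v 0) = 0 → μ (v 1) = μ (v 0 ∪ v 1)) := by
  obtain ⟨hbd, _, _⟩ := hμ
  have ha0 : (0:ℝ) ≤ μ (v 0) := (hbd (v 0)).1
  have hb1 : μ (v 1) ≤ 1 := (hbd (v 1)).2
  have hc1 : μ (v 0 ∪ v 1) ≤ 1 := (hbd (v 0 ∪ v 1)).2
  have hset : cpset v (cpOr pa pb) = v 0 ∪ v 1 := by
    simp [cpOr, cpset, pa, pb, Set.compl_inter, compl_compl]
  have step : qgeval μ v disjZero
      = gimp (gimp (μ (v 0)) 0)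
          (gimp (gcoimp 1 (min (gimp (μ (v 1)) (μ (v 0 ∪ v 1)))
            (gimp (μ (v 0 ∪ v 1)) (μ (v 1))))) 0) := by
    simp only [disjZero, qNot, qDelta, qIff, qgeval, pa, pb, cpset, qBot, qTop, cpOr]
    rw [show gcoimp (μ (v 0)) (μ (v 0)) = 0 from if_pos le_rfl,
        show gimp (μ (v 0)) (μ (v 0)) = 1 from if_pos le_rfl,
        show ((v 0)ᶜ ∩ (v 1)ᶜ)ᶜ = v 0 ∪ v 1 by
          rw [Set.compl_inter, compl_compl, compl_compl]]
  rw [step]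
  set a := μ (v 0) with hA
  set b := μ (v 1) with hB
  set c := μ (v 0 ∪ v 1) with hC
  clear_value a b c
  by_cases hbc : b = c
  · subst hbc
    have hE : min (gimp b b) (gimp b b) = 1 := by simp [gimp]
    rw [hE]
    have : gcoimp (1:ℝ) 1 = 0 := by simp [gcoimp]
    rw [this]
    have : gimp (0:ℝ) 0 = 1 := by simp [gimp]
    rw [this]
    have : gimp (gimp a 0) 1 = 1 := by
      unfold gimp; split_ifs <;> simp_all
    rw [this]
    exact ⟨fun _ _ => rfl, fun _ => rfl⟩
  · have h1 : ¬ (1:ℝ) ≤ min (gimp b c) (gimp c b) := by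
      rcases lt_or_gt_of_ne hbc with h | h
      · have he : gimp c b = b := if_neg (not_le.mpr h)
        intro hcon
        have := le_trans hcon (min_le_right (gimp b c) (gimp c b))
        rw [he] at this
        linarith
      · have he : gimp b c = c := if_neg (not_le.mpr h)
        intro hcon
        have := le_trans hcon (min_le_left (gimp b c) (gimp c b))
        rw [he] at this
        linarith
    rw [show gcoimp 1 (min (gimp b c) (gimp c b)) = 1 from if_neg h1]
    rw [show gimp (1:ℝ) 0 = 0 from if_neg (by norm_num)]
    by_cases ha : a = 0
    · rw [show gimp a 0 = 1 from if_pos (by rw [ha])]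
      rw [show gimp (1:ℝ) 0 = 0 from if_neg (by norm_num)]
      constructor
      · intro h; norm_num at h
      · intro h; exact absurd (h ha) hbc
    · rw [show gimp a 0 = 0 from if_neg (fun hle => ha (le_antisymm hle ha0))]
      rw [show gimp (0:ℝ) 0 = 1 from if_pos le_rfl]
      exact ⟨fun _ h0 => absurd h0 ha, fun _ => rfl⟩

/-- an uncertainty frame validates `disj0` iff for all `Y, Y' ⊆ W`:
`μ(Y) = 0` implies `μ(Y∪Y') = μ(Y')`. -/
theorem disjZero_correspondence (W : Type) (_ : Nonempty W) (μ : Set W → ℝ)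
    (hμ : IsUncertainty μ) :
    QGValidOnFrame μ disjZero ↔
      ∀ Y Y' : Set W, μ Y = 0 → μ (Y ∪ Y') = μ Y' := by
  constructor
  · intro h Y Y' hY
    have := (disjZero_eval_key μ hμ (fun n => if n = 0 then Y else Y')).mp (h _)
    simp only [if_pos rfl, if_neg (by norm_num : (1:ℕ) ≠ 0)] at this
    exact (this hY).symm
  · intro h v
    exact (disjZero_eval_key μ hμ v).mpr (fun h0 => (h (v 0) (v 1) h0).symm)
end

section
/- For any uncertainty frame F = ⟨W, μ⟩: F validates the formula cap, i.e., B⊤ ∧ ~_G B⊥ (where ⊤ is a classical tautology and ⊥ a classical contradiction), if and only if μ is a capacity, i.e., μ(W) = 1 and μ(∅) = 0. -/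
/-- The formula `cap`: `B⊤ ∧ ~_G B⊥` for a classical tautology `⊤ := ~(p∧~p)` and
classical contradiction `⊥ := p∧~p`. -/
def capForm : QGForm := (QGForm.bel cpTop).and (qNot (QGForm.bel cpBot))

/-- an uncertainty frame validates `cap` iff `μ` is a capacity,
i.e., `μ(W) = 1` and `μ(∅) = 0`. -/
theorem cap_correspondence (W : Type) (_ : Nonempty W) (μ : Set W → ℝ)
    (hμ : IsUncertainty μ) :
    QGValidOnFrame μ capForm ↔ (μ Set.univ = 1 ∧ μ ∅ = 0) := by
  obtain ⟨hb, hmono, hlt⟩ := hμ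
  have key : ∀ v : ℕ → Set W, qgeval μ v capForm
      = min (μ Set.univ) (if μ (∅ : Set W) ≤ 0 then (1:ℝ) else 0) := by
    intro v
    have hbot : cpset v cpBot = (∅ : Set W) := by
      simp [cpBot, cpset, Set.inter_compl_self]
    have htop : cpset v cpTop = (Set.univ : Set W) := by
      simp [cpTop, cpset, hbot]
    simp [capForm, qNot, qBot, qgeval, hbot, htop, gcoimp, gimp]
  constructor
  · intro h
    have h1 := key (fun _ => ∅)
    rw [h (fun _ => ∅)] at h1
    by_cases h0 : μ (∅ : Set W) ≤ 0
    · rw [if_pos h0] at h1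
      rw [eq_comm, min_eq_iff] at h1
      have huniv : μ Set.univ = 1 := by
        rcases h1 with ⟨e, _⟩ | ⟨_, le⟩
        · exact e
        · linarith [(hb Set.univ).2]
      exact ⟨huniv, le_antisymm h0 (hb ∅).1⟩
    · rw [if_neg h0] at h1
      have : μ Set.univ ≤ 1 := (hb Set.univ).2
      rcases min_eq_iff.mp h1.symm with ⟨e, _⟩ | ⟨e, _⟩ <;> linarith
  · rintro ⟨h1, h0⟩ v
    rw [key v, h1, if_pos h0.le]
    simp
end

section
/- For any uncertainty frame F = ⟨W, μ⟩: μ satisfies μPM if and only if F validates every instance of the axiom schema QBel, i.e., ~_G△(Bχ→_G Bφ) →_G ~_G△(B(χ∨ψ)→_G B(φ∨ψ)) for all classical formulas φ, χ, ψ such that φ⊃χ is a classical tautology, ~(χ∧ψ) is a classical tautology, and χ⊃φ is not a classical tautology. -/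
/-- An instance of the axiom schema `QBel`:
`~_G△(Bχ→_G Bφ) →_G ~_G△(B(χ∨ψ)→_G B(φ∨ψ))`. -/
def qBelInstance (φ χ ψ : CPForm) : QGForm :=
  (qNot (qDelta ((QGForm.bel χ).imp (QGForm.bel φ)))).imp
    (qNot (qDelta ((QGForm.bel (cpOr χ ψ)).imp (QGForm.bel (cpOr φ ψ)))))

/-- The condition `μPM`: if `μ(X) < μ(Y)`, `X ⊊ Y`, and `Y ∩ Z = ∅`,
then `μ(X∪Z) < μ(Y∪Z)`. -/
def muPM {W : Type} (μ : Set W → ℝ) : Prop :=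
  ∀ X Y Z : Set W, μ X < μ Y → X ⊂ Y → Y ∩ Z = ∅ → μ (X ∪ Z) < μ (Y ∪ Z)


section Aux

open Classical in
/-- Boolean valuation induced at a point. -/
noncomputable def bval {W : Type} (v : ℕ → Set W) (w : W) (n : ℕ) : Bool :=
  decide (w ∈ v n)

lemma mem_cpset {W : Type} (v : ℕ → Set W) (w : W) :
    ∀ θ : CPForm, w ∈ cpset v θ ↔ cpeval (bval v w) θ = true := by
  intro θ
  induction θ with
  | atom n => classical simp [cpset, cpeval, bval]
  | neg φ ih => simp [cpset, cpeval, ih]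
  | and φ ψ ih1 ih2 => simp [cpset, cpeval, ih1, ih2]

lemma cpset_or {W : Type} (v : ℕ → Set W) (φ ψ : CPForm) :
    cpset v (cpOr φ ψ) = cpset v φ ∪ cpset v ψ := by
  simp [cpOr, cpset, Set.compl_inter, compl_compl]

lemma taut_imp_subset {W : Type} {φ χ : CPForm} (h : CPTaut (cpImp φ χ))
    (v : ℕ → Set W) : cpset v φ ⊆ cpset v χ := by
  intro w hw
  have h2 := h (bval v w)
  rw [mem_cpset] at hw ⊢
  simp [cpImp, cpeval, hw] at h2
  exact h2

lemma taut_neg_and_disjoint {W : Type} {χ ψ : CPForm} (h : CPTaut (χ.and ψ).neg)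
    (v : ℕ → Set W) : cpset v χ ∩ cpset v ψ = ∅ := by
  ext w
  have h2 := h (bval v w)
  simp [cpeval] at h2
  simp [mem_cpset]
  intro hχ
  simpa [hχ] using h2

lemma eval_notDelta {W : Type} (μ : Set W → ℝ) (v : ℕ → Set W) (α : QGForm) :
    qgeval μ v (qNot (qDelta α)) = if qgeval μ v α < 1 then 1 else 0 := by
  simp only [qNot, qDelta, qTop, qBot, qgeval, gimp, gcoimp]
  simp only [le_refl, if_true]
  split_ifs <;> linarith

lemma gimp_key {x y : ℝ} (h : x < 1 → y < 1) :
    gimp (if x < 1 then (1:ℝ) else 0) (if y < 1 then (1:ℝ) else 0) = 1 := by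
  split_ifs with h1 h2 h2
  · simp [gimp]
  · exact absurd (h h1) h2
  · simp [gimp]
  · simp [gimp]

lemma eval_qBel {W : Type} (μ : Set W → ℝ) (v : ℕ → Set W) (φ χ ψ : CPForm)
    (h : gimp (μ (cpset v χ)) (μ (cpset v φ)) < 1 →
      gimp (μ (cpset v χ ∪ cpset v ψ)) (μ (cpset v φ ∪ cpset v ψ)) < 1) :
    qgeval μ v (qBelInstance φ χ ψ) = 1 := by
  rw [qBelInstance]
  show gimp (qgeval μ v _) (qgeval μ v _) = 1
  rw [eval_notDelta, eval_notDelta]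
  simp only [qgeval, cpset_or]
  exact gimp_key h

lemma gimp_lt_one {a b : ℝ} (hb : b < 1) (hba : b < a) : gimp a b < 1 := by
  rw [gimp, if_neg (by linarith)]; exact hb

lemma lt_of_gimp_lt_one {a b : ℝ} (h : gimp a b < 1) : b < a := by
  rw [gimp] at h
  by_contra hc
  rw [if_pos (by linarith)] at h
  linarith

end Aux

/-- an uncertainty measure `μ` satisfies `μPM` iff the frame `⟨W, μ⟩`
validates every instance of the schema `QBel` (where `φ ⊃ χ` and `~(χ∧ψ)` are
classical tautologies and `χ ⊃ φ` is not). -/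
theorem qBel_correspondence (W : Type) (_ : Nonempty W) (μ : Set W → ℝ)
    (hμ : IsUncertainty μ) :
    muPM μ ↔
      ∀ φ χ ψ : CPForm, CPTaut (cpImp φ χ) → CPTaut (χ.and ψ).neg →
        ¬ CPTaut (cpImp χ φ) → QGValidOnFrame μ (qBelInstance φ χ ψ) := by
  obtain ⟨hbound, hmono, _⟩ := hμ
  constructor
  · intro hPM φ χ ψ hφχ hdisj _ v
    apply eval_qBel
    intro h1
    have hba := lt_of_gimp_lt_one h1
    have hsub : cpset v φ ⊆ cpset v χ := taut_imp_subset hφχ v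
    have hne : cpset v φ ≠ cpset v χ := fun he => by rw [he] at hba; exact lt_irrefl _ hba
    have hkey := hPM (cpset v φ) (cpset v χ) (cpset v ψ) hba ⟨hsub, fun h => hne (le_antisymm hsub h)⟩ (taut_neg_and_disjoint hdisj v)
    exact gimp_lt_one (lt_of_lt_of_le hkey (hbound _).2) hkey
  · intro h X Y Z hlt hsub hdisj
    set φ : CPForm := (CPForm.atom 0).and (CPForm.atom 1) with hφ
    set χ : CPForm := CPForm.atom 0 with hχ
    set ψ : CPForm := ((CPForm.atom 0).neg).and (CPForm.atom 2) with hψ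
    have t1 : CPTaut (cpImp φ χ) := by
      intro u; cases h0 : u 0 <;> simp [cpImp, cpeval, hφ, hχ, h0]
    have t2 : CPTaut (χ.and ψ).neg := by
      intro u; cases h0 : u 0 <;> simp [cpeval, hψ, hχ, h0]
    have t3 : ¬ CPTaut (cpImp χ φ) := by
      intro hT
      have := hT (fun n => if n = 0 then true else false)
      simp [cpImp, cpeval, hφ, hχ] at this
    set v : ℕ → Set W := fun n => if n = 0 then Y else if n = 1 then X ∪ Yᶜ else Z ∪ Y with hv
    have hXY : X ⊆ Y := hsub.1
    have hZY : Z ⊆ Yᶜ := fun w hw hwY => by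
      have : w ∈ Y ∩ Z := ⟨hwY, hw⟩
      rw [hdisj] at this; exact this
    have eφ : cpset v φ = X := by
      ext w
      simp [cpset, hφ, hv]
      constructor
      · rintro ⟨hY, hX | hYc⟩
        · exact hX
        · exact absurd hY hYc
      · intro hX; exact ⟨hXY hX, Or.inl hX⟩
    have eχ : cpset v χ = Y := by simp [cpset, hχ, hv]
    have eψ : cpset v ψ = Z := by
      ext w
      simp [cpset, hψ, hv]
      constructor
      · rintro ⟨hYc, hZ | hY⟩
        · exact hZ
        · exact absurd hY hYc
      · intro hZ; exact ⟨hZY hZ, Or.inl hZ⟩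
    have hval := h φ χ ψ t1 t2 t3 v
    rw [qBelInstance] at hval
    have hval' : gimp (qgeval μ v (qNot (qDelta ((QGForm.bel χ).imp (QGForm.bel φ)))))
        (qgeval μ v (qNot (qDelta ((QGForm.bel (cpOr χ ψ)).imp (QGForm.bel (cpOr φ ψ)))))) = 1 := hval
    rw [eval_notDelta, eval_notDelta] at hval'
    simp only [qgeval, cpset_or, eφ, eχ, eψ] at hval'
    have hP : gimp (μ Y) (μ X) < 1 :=
      gimp_lt_one (lt_of_lt_of_le hlt (hbound Y).2) hlt
    rw [if_pos hP] at hval'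
    have hQ : gimp (μ (Y ∪ Z)) (μ (X ∪ Z)) < 1 := by
      by_contra hc
      rw [if_neg hc] at hval'
      norm_num [gimp] at hval' 
    exact lt_of_gimp_lt_one hQ
end

section
/- Let ⟨M, x⟩ be a pointed Gärdenfors model and M_QPG its G-counterpart. Then for every simple inequality formula φ: M, x ⊨ φ if and only if e(φ^△) = 1 in M_QPG. -/
/-- A finitely additive probability measure on `P(W)`, valued in `[0,1]`. -/
def IsProbMeasure {W : Type} (π : Set W → ℝ) : Prop :=
  π ∅ = 0 ∧ π Set.univ = 1 ∧ (∀ X : Set W, π X ∈ Set.Icc (0:ℝ) 1) ∧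
    ∀ A B : Set W, Disjoint A B → π (A ∪ B) = π A + π B

/-- Simple inequality formulas: Boolean combinations (via `~`, `∧`, `∨`, `⊃`)
of inequalities `χ ≲ χ'` between classical formulas. -/
inductive SIF : Type
  | leq : CPForm → CPForm → SIF
  | neg : SIF → SIF
  | and : SIF → SIF → SIF
  | or  : SIF → SIF → SIF
  | imp : SIF → SIF → SIF

/-- Satisfaction of a SIF at a point of a Gärdenfors model: since SIFs contain no
free propositional atoms, it only depends on the measure `P` attached to the point
(and the valuation `v`). -/
def SIFsat {W : Type} (P : Set W → ℝ) (v : ℕ → Set W) : SIF → Prop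
  | .leq χ χ' => P (cpset v χ) ≤ P (cpset v χ')
  | .neg φ => ¬ SIFsat P v φ
  | .and φ ψ => SIFsat P v φ ∧ SIFsat P v ψ
  | .or φ ψ => SIFsat P v φ ∨ SIFsat P v ψ
  | .imp φ ψ => SIFsat P v φ → SIFsat P v ψ

/-- The translation `φ^△` of SIFs into `L_QG`. -/
def sifTrans : SIF → QGForm
  | .leq χ χ' => qDelta ((QGForm.bel χ).imp (QGForm.bel χ'))
  | .neg φ => qNot (sifTrans φ)
  | .and φ ψ => (sifTrans φ).and (sifTrans ψ)
  | .or φ ψ => (sifTrans φ).or (sifTrans ψ)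
  | .imp φ ψ => (sifTrans φ).imp (sifTrans ψ)

/-- `μ` satisfies the Kraft–Pratt–Seidenberg conditions `μKPS_m` for all `m`:
for all families `X_0,…,X_m`, `Y_0,…,Y_m` of subsets of `W`, if `μ(X_j) ≤ μ(Y_j)`
for all `j < m` and every `w ∈ W` belongs to exactly as many `X_i`'s as `Y_i`'s,
then `μ(X_m) ≥ μ(Y_m)`. -/
def muKPS {W : Type} (μ : Set W → ℝ) : Prop :=
  ∀ (m : ℕ) (X Y : Fin (m + 1) → Set W),
    (∀ j : Fin m, μ (X j.castSucc) ≤ μ (Y j.castSucc)) →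
    (∀ w : W, Nat.card {i : Fin (m + 1) // w ∈ X i} = Nat.card {i : Fin (m + 1) // w ∈ Y i}) →
    μ (Y (Fin.last m)) ≤ μ (X (Fin.last m))


lemma sif_key {W : Type} (μ : Set W → ℝ) (hμ : ∀ X : Set W, μ X ∈ Set.Icc (0:ℝ) 1)
    (v : ℕ → Set W) (φ : SIF) :
    (SIFsat μ v φ ↔ qgeval μ v (sifTrans φ) = 1) ∧
    (qgeval μ v (sifTrans φ) = 1 ∨ qgeval μ v (sifTrans φ) = 0) := by
  induction φ with
  | leq χ χ' =>
    have h1 := (hμ (cpset v χ)).2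
    have h2 := (hμ (cpset v χ')).1
    simp only [sifTrans, qDelta, qTop, qBot, SIFsat, qgeval, gimp, gcoimp, le_refl, ↓reduceIte]
    by_cases a : μ (cpset v χ) ≤ μ (cpset v χ')
    · simp [a]
    · have hn : ¬ (1:ℝ) ≤ μ (cpset v χ') := by linarith
      simp [a, hn]
  | neg φ ih =>
    obtain ⟨hiff, hd⟩ := ih
    simp only [sifTrans, qNot, qBot, SIFsat, qgeval, gimp, gcoimp, hiff]
    rcases hd with h | h <;> rw [h] <;> norm_num
  | and φ ψ ihφ ihψ =>
    obtain ⟨hφ, hdφ⟩ := ihφ; obtain ⟨hψ, hdψ⟩ := ihψ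
    simp only [sifTrans, SIFsat, qgeval, hφ, hψ]
    rcases hdφ with h | h <;> rcases hdψ with h' | h' <;> rw [h, h'] <;> norm_num
  | or φ ψ ihφ ihψ =>
    obtain ⟨hφ, hdφ⟩ := ihφ; obtain ⟨hψ, hdψ⟩ := ihψ
    simp only [sifTrans, SIFsat, qgeval, hφ, hψ]
    rcases hdφ with h | h <;> rcases hdψ with h' | h' <;> rw [h, h'] <;> norm_num
  | imp φ ψ ihφ ihψ =>
    obtain ⟨hφ, hdφ⟩ := ihφ; obtain ⟨hψ, hdψ⟩ := ihψ
    simp only [sifTrans, SIFsat, qgeval, gimp, hφ, hψ]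
    rcases hdφ with h | h <;> rcases hdψ with h' | h' <;> rw [h, h'] <;> norm_num

/-- let `⟨M, x⟩` be a pointed Gärdenfors model and `M_QPG` its
G-counterpart (the QPG model over the same carrier and valuation whose measure is
`P_x`). Then for every simple inequality formula `φ`:
`M, x ⊨ φ` iff `e(φ^△) = 1` in `M_QPG`. -/
theorem pointed_Gardenfors_to_QPG (U : Type) (_ : Nonempty U)
    (P : U → Set U → ℝ) (hP : ∀ y : U, IsProbMeasure (P y))
    (v : ℕ → Set U) (x : U) (φ : SIF) :
    SIFsat (P x) v φ ↔ qgeval (P x) v (sifTrans φ) = 1 := by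
  exact (sif_key (P x) (hP x).2.2.1 v φ).1
end

section
/- For every QPG model ⟨W, v, μ, e⟩ with W finite, there exists a QP-counterpart, i.e., a probability measure π on P(W) such that for all X, Y ⊆ W, μ(X) ≤ μ(Y) if and only if π(X) ≤ π(Y). -/
section FarkasHelpers
open Finset


/-- helper: pick a point between two finite sets -/
lemma exists_between_finsets (A B : Finset ℚ) (h : ∀ a ∈ A, ∀ b ∈ B, a ≤ b) :
    ∃ t : ℚ, (∀ a ∈ A, a ≤ t) ∧ (∀ b ∈ B, t ≤ b) := by
  rcases A.eq_empty_or_nonempty with hA | hA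
  · rcases B.eq_empty_or_nonempty with hB | hB
    · exact ⟨0, by simp [hA], by simp [hB]⟩
    · exact ⟨B.min' hB, by simp [hA], fun b hb => B.min'_le b hb⟩
  · exact ⟨A.max' hA, fun a ha => A.le_max' a ha, fun b hb => h _ (A.max'_mem hA) b hb⟩

theorem farkasQ : ∀ (n : ℕ) (ι : Type) [Fintype ι] (v : ι → Fin n → ℚ) (b : ι → ℚ),
    (¬ ∃ x : Fin n → ℚ, ∀ i, b i ≤ ∑ k, v i k * x k) →
    ∃ c : ι → ℚ, (∀ i, 0 ≤ c i) ∧ (∀ k, ∑ i, c i * v i k = 0) ∧ 0 < ∑ i, c i * b i := by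
  intro n
  induction n with
  | zero =>
    intro ι _ v b h
    classical
    push_neg at h
    obtain ⟨i0, hi0⟩ := h (fun _ => 0)
    refine ⟨fun j => if j = i0 then 1 else 0, ?_, ?_, ?_⟩
    · intro i; dsimp only; split <;> norm_num
    · intro k; exact k.elim0
    · rw [Finset.sum_eq_single i0]
      · simpa using lt_of_not_ge (by simpa using hi0)
      · intro j _ hj; simp [hj]
      · intro hh; simp at hh
  | succ n IH =>
    intro ι _ v b h
    classical
    set a : ι → ℚ := fun i => v i (Fin.last n) with ha
    set u : ι → Fin n → ℚ := fun i k => v i k.castSucc with hu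
    set κ := {i : ι // a i = 0} ⊕ {p : ι × ι // a p.1 < 0 ∧ 0 < a p.2} with hκ
    set w : κ → Fin n → ℚ := fun q => match q with
      | .inl i => u i.1
      | .inr p => fun k => a p.1.2 * u p.1.1 k - a p.1.1 * u p.1.2 k with hw
    set β : κ → ℚ := fun q => match q with
      | .inl i => b i.1
      | .inr p => a p.1.2 * b p.1.1 - a p.1.1 * b p.1.2 with hβ
    -- new system infeasible
    have hinf : ¬ ∃ x : Fin n → ℚ, ∀ q : κ, β q ≤ ∑ k, w q k * x k := by
      rintro ⟨x', hx'⟩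
      apply h
      set S : ι → ℚ := fun i => ∑ k, u i k * x' k with hS
      have key : ∀ i j : ι, a i < 0 → 0 < a j →
          (b j - S j) / a j ≤ (S i - b i) / (-a i) := by
        intro i j hi hj
        rw [div_le_div_iff₀ hj (by linarith)]
        have := hx' (.inr ⟨(i, j), hi, hj⟩)
        simp only [hw, hβ] at this
        have : a j * b i - a i * b j ≤ ∑ k, (a j * u i k - a i * u j k) * x' k := this
        have hsum : ∑ k, (a j * u i k - a i * u j k) * x' k = a j * S i - a i * S j := by
          rw [hS]; simp only [Finset.mul_sum, ← Finset.sum_sub_distrib]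
          congr 1; ext k; ring
        rw [hsum] at this
        nlinarith
      obtain ⟨t, htA, htB⟩ := exists_between_finsets
        ((univ.filter (fun j => 0 < a j)).image (fun j => (b j - S j) / a j))
        ((univ.filter (fun i => a i < 0)).image (fun i => (S i - b i) / (-a i)))
        (by
          intro x hx y hy
          simp only [mem_image, mem_filter, mem_univ, true_and] at hx hy
          obtain ⟨j, hj, rfl⟩ := hx
          obtain ⟨i, hi, rfl⟩ := hy
          exact key i j hi hj)
      refine ⟨Fin.snoc x' t, ?_⟩
      intro i
      have hsnoc : ∑ k : Fin (n+1), v i k * (Fin.snoc x' t : Fin (n+1) → ℚ) k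
          = S i + a i * t := by
        rw [Fin.sum_univ_castSucc]
        simp [hS, hu, ha]
      rw [hsnoc]
      rcases lt_trichotomy (a i) 0 with hlt | heq | hgt
      · have := htB _ (mem_image.2 ⟨i, by simp [hlt], rfl⟩)
        rw [le_div_iff₀ (by linarith)] at this
        linarith
      · have := hx' (.inl ⟨i, heq⟩)
        simp only [hw, hβ] at this
        simpa [heq, ← hS] using this
      · have := htA _ (mem_image.2 ⟨i, by simp [hgt], rfl⟩)
        rw [div_le_iff₀ hgt] at this
        linarith
    obtain ⟨c', hc'0, hc'v, hc'b⟩ := IH κ w β hinf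
    -- lift coefficients
    set γ : κ → ι → ℚ := fun q i => match q with
      | .inl i0 => if i = i0.1 then 1 else 0
      | .inr p => (if i = p.1.1 then a p.1.2 else 0) + (if i = p.1.2 then -a p.1.1 else 0)
      with hγ
    have hγ0 : ∀ q i, 0 ≤ γ q i := by
      rintro (i0 | p) i <;> simp only [hγ]
      · split <;> norm_num
      · have h1 := p.2.1; have h2 := p.2.2
        have e1 : (0:ℚ) ≤ (if i = (p.1).1 then a (p.1).2 else 0) := by split <;> linarith
        have e2 : (0:ℚ) ≤ (if i = (p.1).2 then -a (p.1).1 else 0) := by split <;> linarith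
        linarith
    have hγf1 : ∀ (i0 : {i : ι // a i = 0}) (f : ι → ℚ),
        ∑ i, γ (.inl i0) i * f i = f i0.1 := by
      intro i0 f
      simp [hγ, ite_mul, Finset.sum_ite_eq']
    have hγf2 : ∀ (p : {p : ι × ι // a p.1 < 0 ∧ 0 < a p.2}) (f : ι → ℚ),
        ∑ i, γ (.inr p) i * f i = a p.1.2 * f p.1.1 - a p.1.1 * f p.1.2 := by
      intro p f
      simp [hγ, add_mul, ite_mul, Finset.sum_add_distrib, Finset.sum_ite_eq']
      ring
    refine ⟨fun i => ∑ q : κ, c' q * γ q i, ?_, ?_, ?_⟩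
    · intro i
      exact Finset.sum_nonneg fun q _ => mul_nonneg (hc'0 q) (hγ0 q i)
    · intro k
      have swap : ∑ i, (∑ q : κ, c' q * γ q i) * v i k
          = ∑ q : κ, c' q * (∑ i, γ q i * v i k) := by
        calc ∑ i, (∑ q : κ, c' q * γ q i) * v i k
            = ∑ i, ∑ q : κ, c' q * γ q i * v i k := by
              apply Finset.sum_congr rfl; intro i _; rw [Finset.sum_mul]
          _ = ∑ q : κ, ∑ i, c' q * γ q i * v i k := Finset.sum_comm
          _ = ∑ q : κ, c' q * (∑ i, γ q i * v i k) := by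
              apply Finset.sum_congr rfl; intro q _
              rw [Finset.mul_sum]
              apply Finset.sum_congr rfl; intro i _; ring
      rw [swap]
      refine Fin.lastCases ?_ ?_ k
      · apply Finset.sum_eq_zero
        rintro (i0 | p) _
        · rw [hγf1 i0 (fun i => v i (Fin.last n))]
          have : a i0.1 = 0 := i0.2
          simp only [ha] at this
          simp [this]
        · rw [hγf2 p (fun i => v i (Fin.last n))]
          have : a p.1.2 * v p.1.1 (Fin.last n) - a p.1.1 * v p.1.2 (Fin.last n) = 0 := by
            simp only [ha]; ring
          rw [this, mul_zero]
      · intro k'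
        have : ∀ q : κ, (∑ i, γ q i * v i k'.castSucc) = w q k' := by
          rintro (i0 | p)
          · rw [hγf1 i0 (fun i => v i k'.castSucc)]
          · rw [hγf2 p (fun i => v i k'.castSucc)]
        calc ∑ q : κ, c' q * (∑ i, γ q i * v i k'.castSucc)
            = ∑ q : κ, c' q * w q k' := by
              apply Finset.sum_congr rfl; intro q _; rw [this q]
          _ = 0 := hc'v k'
    · have swap : ∑ i, (∑ q : κ, c' q * γ q i) * b i
          = ∑ q : κ, c' q * (∑ i, γ q i * b i) := by
        calc ∑ i, (∑ q : κ, c' q * γ q i) * b i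
            = ∑ i, ∑ q : κ, c' q * γ q i * b i := by
              apply Finset.sum_congr rfl; intro i _; rw [Finset.sum_mul]
          _ = ∑ q : κ, ∑ i, c' q * γ q i * b i := Finset.sum_comm
          _ = ∑ q : κ, c' q * (∑ i, γ q i * b i) := by
              apply Finset.sum_congr rfl; intro q _
              rw [Finset.mul_sum]
              apply Finset.sum_congr rfl; intro i _; ring
      rw [swap]
      have : ∀ q : κ, (∑ i, γ q i * b i) = β q := by
        rintro (i0 | p)
        · rw [hγf1 i0 b]
        · rw [hγf2 p b]
      calc (0:ℚ) < ∑ q : κ, c' q * β q := hc'b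
        _ = ∑ q : κ, c' q * (∑ i, γ q i * b i) := by
              apply Finset.sum_congr rfl; intro q _; rw [this q]

end FarkasHelpers

/-- every QPG model over a finite carrier has a QP-counterpart:
there is a probability measure `π` on `P(W)` agreeing with the order induced by `μ`. -/
theorem QPG_has_QP_counterpart (W : Type) (_ : Nonempty W) [Finite W]
    (μ : Set W → ℝ) (v : ℕ → Set W) (hμ : IsUncertainty μ) (hKPS : muKPS μ) :
    ∃ π : Set W → ℝ, IsProbMeasure π ∧ ∀ X Y : Set W, (μ X ≤ μ Y ↔ π X ≤ π Y) := by
  classical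
  obtain ⟨hIcc, hmono, hne⟩ := hμ
  haveI : Fintype W := Fintype.ofFinite W
  set N := Fintype.card W with hN
  set eW := Fintype.equivFin W with heW
  set ι := {p : Set W × Set W // μ p.1 ≤ μ p.2} with hι
  haveI : Fintype ι := Fintype.ofFinite _
  set ind : Set W → W → ℚ := fun X w => if w ∈ X then 1 else 0 with hind
  set vv : ι → Fin N → ℚ := fun p k => ind p.1.2 (eW.symm k) - ind p.1.1 (eW.symm k) with hvv
  set bb : ι → ℚ := fun p => if μ p.1.1 < μ p.1.2 then 1 else 0 with hbb
  have feas : ∃ x : Fin N → ℚ, ∀ p : ι, bb p ≤ ∑ k, vv p k * x k := by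
    by_contra hcon
    obtain ⟨c, hc0, hcv, hcb⟩ := farkasQ N ι vv bb hcon
    -- clear denominators
    set d : ℕ := ∏ p : ι, (c p).den with hd
    have hdpos : 0 < d := Finset.prod_pos (fun p _ => (c p).pos)
    have hint : ∀ p : ι, ∃ z : ℕ, (z : ℚ) = c p * d := by
      intro p
      obtain ⟨e, he⟩ := Finset.dvd_prod_of_mem (fun p : ι => (c p).den) (Finset.mem_univ p)
      refine ⟨((c p).num.toNat * e), ?_⟩
      have hnum : (((c p).num.toNat : ℕ) : ℚ) = ((c p).num : ℚ) := by
        exact_mod_cast Int.toNat_of_nonneg (Rat.num_nonneg.mpr (hc0 p))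
      have hmd : ((c p).den : ℚ) * (c p) = ((c p).num : ℚ) := by
        have h := Rat.num_div_den (c p)
        have hdq : (((c p).den : ℚ)) ≠ 0 := by exact_mod_cast (c p).den_nz
        field_simp at h ⊢
        linarith
      push_cast [he]
      rw [hnum]
      push_cast
      rw [← hmd, hd, he]
      push_cast
      ring
    choose kp hkp using hint
    -- balance condition over ℕ
    have hbal : ∀ w : W, ∑ p : ι, kp p * (if w ∈ p.1.1 then 1 else 0)
        = ∑ p : ι, kp p * (if w ∈ p.1.2 then 1 else 0) := by
      intro w
      have h0 : ∑ p : ι, (kp p : ℚ) * (ind p.1.2 w - ind p.1.1 w) = 0 := by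
        have hw := hcv (eW w)
        calc ∑ p : ι, (kp p : ℚ) * (ind p.1.2 w - ind p.1.1 w)
            = ∑ p : ι, (c p * vv p (eW w)) * d := by
              apply Finset.sum_congr rfl; intro p _
              rw [hkp p, hvv]
              simp only [Equiv.symm_apply_apply]
              ring
          _ = (∑ p : ι, c p * vv p (eW w)) * d := (Finset.sum_mul _ _ _).symm
          _ = 0 := by rw [hw, zero_mul]
      have h1 : ∑ p : ι, (kp p : ℚ) * ind p.1.1 w = ∑ p : ι, (kp p : ℚ) * ind p.1.2 w := by
        rw [← sub_eq_zero, ← Finset.sum_sub_distrib, ← neg_eq_zero, ← Finset.sum_neg_distrib]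
        rw [← h0]
        apply Finset.sum_congr rfl; intro p _; ring
      have : ((∑ p : ι, kp p * (if w ∈ p.1.1 then 1 else 0) : ℕ) : ℚ)
          = ((∑ p : ι, kp p * (if w ∈ p.1.2 then 1 else 0) : ℕ) : ℚ) := by
        push_cast
        convert h1 using 2 with p _ p _ <;>
          · rw [hind]; split <;> simp
      exact_mod_cast this
    -- find a strict pair with positive coefficient
    have hex : ∃ p : ι, 0 < c p * bb p := by
      by_contra hno
      push_neg at hno
      have : ∑ p : ι, c p * bb p ≤ 0 := Finset.sum_nonpos (fun p _ => hno p)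
      linarith
    obtain ⟨pstar, hps⟩ := hex
    have hstrict : μ pstar.1.1 < μ pstar.1.2 := by
      by_contra hns
      rw [hbb] at hps
      simp only [if_neg hns, mul_zero] at hps
      exact lt_irrefl 0 hps
    have hcpos : 0 < c pstar := by
      rcases lt_or_eq_of_le (hc0 pstar) with h | h
      · exact h
      · rw [← h, zero_mul] at hps; exact absurd hps (lt_irrefl 0)
    have hkpos : 0 < kp pstar := by
      rcases Nat.eq_zero_or_pos (kp pstar) with h | h
      · exfalso
        have := hkp pstar
        rw [h] at this
        have hd0 : (0:ℚ) < (d:ℚ) := by exact_mod_cast hdpos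
        have : (0:ℚ) = c pstar * d := by simpa using this
        nlinarith
      · exact h
    -- build the multiset of pairs
    set M : Multiset ι := Multiset.replicate (kp pstar - 1) pstar
        + (Finset.univ.erase pstar).val.bind (fun p => Multiset.replicate (kp p) p) with hM
    set L : List ι := M.toList ++ [pstar] with hL
    have hlen : L.length = M.toList.length + 1 := by simp [hL]
    set m := M.toList.length with hm
    set q : Fin (m + 1) → ι := fun i => L[(i : ℕ)]'(by rw [hlen]; exact i.2) with hq
    have hqlast : q (Fin.last m) = pstar := by
      show L[(m : ℕ)]'_ = pstar
      exact List.getElem_concat_length (l := M.toList) (a := pstar) (i := m) rfl _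
    -- the count lemma
    have hcount : ∀ (g : ι → ℕ), ∑ i : Fin (m + 1), g (q i) = ∑ p : ι, kp p * g p := by
      intro g
      have e1 : ∑ i : Fin (m + 1), g (q i) = ∑ i : Fin L.length, g (L[(i : ℕ)]) := by
        rw [← Equiv.sum_comp (finCongr hlen) (fun i : Fin (m+1) => g (q i))]
        apply Finset.sum_congr rfl
        intro i _
        rfl
      rw [e1, Fin.sum_univ_fun_getElem L g]
      have e2 : (L.map g).sum = (M.toList.map g).sum + g pstar := by
        rw [hL]; simp
      rw [e2]
      have e3 : (M.toList.map g).sum = (M.map g).sum := by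
        rw [← Multiset.sum_coe, ← Multiset.map_coe, Multiset.coe_toList]
      rw [e3, hM]
      rw [Multiset.map_add, Multiset.sum_add, Multiset.map_replicate, Multiset.sum_replicate,
        Multiset.map_bind, Multiset.sum_bind]
      have e4 : ((Finset.univ.erase pstar).val.map
          (fun p => ((Multiset.replicate (kp p) p).map g).sum)).sum
          = ∑ p ∈ Finset.univ.erase pstar, kp p * g p := by
        apply congrArg
        apply Multiset.map_congr rfl
        intro p _
        rw [Multiset.map_replicate, Multiset.sum_replicate, smul_eq_mul]
      rw [e4, smul_eq_mul]
      obtain ⟨k', hk'⟩ : ∃ k', kp pstar = k' + 1 :=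
        ⟨kp pstar - 1, (Nat.succ_pred_eq_of_pos hkpos).symm⟩
      rw [← Finset.add_sum_erase Finset.univ _ (Finset.mem_univ pstar)]
      rw [hk']
      simp only [Nat.add_sub_cancel]
      ring
    -- apply KPS
    have h2 : ∀ w : W, Nat.card {i : Fin (m + 1) // w ∈ (q i).1.1}
        = Nat.card {i : Fin (m + 1) // w ∈ (q i).1.2} := by
      intro w
      have hcard : ∀ (Z : ι → Set W), Nat.card {i : Fin (m + 1) // w ∈ Z (q i)}
          = ∑ p : ι, kp p * (if w ∈ Z p then 1 else 0) := by
        intro Z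
        rw [Nat.card_eq_fintype_card, Fintype.card_subtype, Finset.card_filter]
        rw [← hcount (fun p => if w ∈ Z p then 1 else 0)]
      rw [hcard (fun p => p.1.1), hcard (fun p => p.1.2)]
      exact hbal w
    have := hKPS m (fun i => (q i).1.1) (fun i => (q i).1.2)
      (fun j => (q j.castSucc).2) h2
    simp only [hqlast] at this
    exact absurd this (not_le.mpr hstrict)
  obtain ⟨x, hx⟩ := feas
  set P0 : Set W → ℚ := fun X => ∑ w : W, if w ∈ X then x (eW w) else 0 with hP0
  have hdot : ∀ p : ι, ∑ k, vv p k * x k = P0 p.1.2 - P0 p.1.1 := by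
    intro p
    rw [← Equiv.sum_comp eW (fun k => vv p k * x k)]
    simp only [hvv, Equiv.symm_apply_apply]
    rw [hP0]
    rw [← Finset.sum_sub_distrib]
    apply Finset.sum_congr rfl
    intro w _
    simp only [hind]
    by_cases h2 : w ∈ p.1.2 <;> by_cases h1 : w ∈ p.1.1 <;> simp [h1, h2]
  have hP1 : ∀ X Y : Set W, μ X ≤ μ Y → P0 X ≤ P0 Y := by
    intro X Y hXY
    have := hx ⟨(X, Y), hXY⟩
    rw [hdot] at this
    simp only [hbb] at this
    split at this <;> linarith
  have hP2 : ∀ X Y : Set W, μ X < μ Y → P0 X + 1 ≤ P0 Y := by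
    intro X Y hXY
    have := hx ⟨(X, Y), le_of_lt hXY⟩
    rw [hdot] at this
    simp only [hbb, if_pos hXY] at this
    linarith
  have hP0e : P0 ∅ = 0 := by simp [hP0]
  have hu1 : (1:ℚ) ≤ P0 Set.univ := by
    have := hP2 ∅ Set.univ hne
    rw [hP0e] at this; linarith
  have hQpos : (0:ℚ) < P0 Set.univ := by linarith
  have hQle : ∀ X Y : Set W, (μ X ≤ μ Y ↔ P0 X ≤ P0 Y) := by
    intro X Y
    constructor
    · exact hP1 X Y
    · intro h
      by_contra hc
      have hlt : μ Y < μ X := lt_of_not_ge hc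
      have := hP2 Y X hlt
      linarith
  refine ⟨fun X => ((P0 X / P0 Set.univ : ℚ) : ℝ), ⟨?_, ?_, ?_, ?_⟩, ?_⟩
  · show ((P0 (∅ : Set W) / P0 Set.univ : ℚ) : ℝ) = 0
    rw [hP0e]; simp
  · show ((P0 (Set.univ : Set W) / P0 Set.univ : ℚ) : ℝ) = 1
    rw [div_self (ne_of_gt hQpos)]; norm_num
  · intro X
    have h0 : (0:ℚ) ≤ P0 X := by
      have h' := hP1 ∅ X (hmono (Set.empty_subset X))
      rw [hP0e] at h'; linarith
    have h1 : P0 X ≤ P0 Set.univ := hP1 X Set.univ (hmono (Set.subset_univ X))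
    constructor
    · show (0:ℝ) ≤ ((P0 X / P0 Set.univ : ℚ) : ℝ)
      have : (0:ℚ) ≤ P0 X / P0 Set.univ := div_nonneg h0 (le_of_lt hQpos)
      exact_mod_cast this
    · show ((P0 X / P0 Set.univ : ℚ) : ℝ) ≤ 1
      have : P0 X / P0 Set.univ ≤ 1 := by rw [div_le_one hQpos]; exact h1
      exact_mod_cast this
  · intro A B hAB
    show ((P0 (A ∪ B) / P0 Set.univ : ℚ) : ℝ)
        = ((P0 A / P0 Set.univ : ℚ) : ℝ) + ((P0 B / P0 Set.univ : ℚ) : ℝ)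
    have hadd : P0 (A ∪ B) = P0 A + P0 B := by
      simp only [hP0]
      rw [← Finset.sum_add_distrib]
      apply Finset.sum_congr rfl
      intro w _
      by_cases hA : w ∈ A
      · have hB : w ∉ B := fun hB => (Set.disjoint_left.mp hAB hA) hB
        simp [hA, hB]
      · by_cases hB : w ∈ B <;> simp [hA, hB]
    have : P0 (A ∪ B) / P0 Set.univ = P0 A / P0 Set.univ + P0 B / P0 Set.univ := by
      rw [hadd, add_div]
    exact_mod_cast this
  · intro X Y
    show μ X ≤ μ Y ↔ ((P0 X / P0 Set.univ : ℚ) : ℝ) ≤ ((P0 Y / P0 Set.univ : ℚ) : ℝ)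
    rw [Rat.cast_le, div_le_div_iff_of_pos_right hQpos]
    exact hQle X Y
end

section
/- For any uncertainty frame F = ⟨W, μ⟩: F validates all instances of the axiom schemas KPS_m (m ∈ ℕ) if and only if μ satisfies the Kraft–Pratt–Seidenberg conditions μKPS_m for all m ∈ ℕ. -/
/-- Big classical conjunction of a list of formulas. -/
def cpBigAnd : List CPForm → CPForm
  | [] => cpTop
  | φ :: l => φ.and (cpBigAnd l)

/-- Big classical disjunction of a list of formulas. -/
def cpBigOr : List CPForm → CPForm
  | [] => cpBot
  | φ :: l => cpOr φ (cpBigOr l)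

/-- Big `L_QG` conjunction of a list of formulas. -/
def qBigAnd : List QGForm → QGForm
  | [] => qTop
  | α :: l => α.and (qBigAnd l)

/-- The disjuncts of the `E_G` formula: for each pair of subsets `K, L` of indices
with `|K| = |L|`, the conjunction `⋀_{k∈K}~φ_k ∧ ⋀_{k'∉K}φ_{k'} ∧ ⋀_{l∈L}~χ_l ∧ ⋀_{l'∉L}χ_{l'}`. -/
noncomputable def EGdisjuncts {n : ℕ} (φ χ : Fin n → CPForm) : List CPForm :=
  (((Finset.univ : Finset (Fin n)).powerset ×ˢ (Finset.univ : Finset (Fin n)).powerset).filter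
    (fun KL => KL.1.card = KL.2.card)).toList.map
    (fun KL => cpBigAnd
      ((List.ofFn fun k : Fin n => if k ∈ KL.1 then (φ k).neg else φ k) ++
       (List.ofFn fun l : Fin n => if l ∈ KL.2 then (χ l).neg else χ l)))

/-- The formula `φ_1,…,φ_n E_G χ_1,…,χ_n`:
`△(B(big disjunction) ↔_G B⊤)`. -/
noncomputable def EGform {n : ℕ} (φ χ : Fin n → CPForm) : QGForm :=
  qDelta (qIff (QGForm.bel (cpBigOr (EGdisjuncts φ χ))) (QGForm.bel cpTop))

/-- An instance of the axiom schema `KPS_m`: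
`(φ_0,…,φ_m E_G χ_0,…,χ_m) ∧ ⋀_{i=0}^{m-1}△(Bφ_i→_G Bχ_i) →_G △(Bχ_m→_G Bφ_m)`. -/
noncomputable def KPSform (m : ℕ) (φ χ : Fin (m + 1) → CPForm) : QGForm :=
  ((EGform φ χ).and (qBigAnd (List.ofFn fun i : Fin m =>
      qDelta ((QGForm.bel (φ i.castSucc)).imp (QGForm.bel (χ i.castSucc)))))).imp
    (qDelta ((QGForm.bel (χ (Fin.last m))).imp (QGForm.bel (φ (Fin.last m)))))

open scoped Classical

section Aux

variable {W : Type}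

/-- Counting function: in how many of the sets `Xs i` does `w` lie. -/
noncomputable def cnt {n : ℕ} (Xs : Fin n → Set W) (w : W) : ℕ :=
  ∑ i, if w ∈ Xs i then 1 else 0

lemma natCard_eq_cnt {n : ℕ} (Xs : Fin n → Set W) (w : W) :
    Nat.card {i : Fin n // w ∈ Xs i} = cnt Xs w := by
  classical
  rw [Nat.card_eq_fintype_card, Fintype.card_subtype, Finset.card_filter]
  exact Finset.sum_congr rfl fun i _ => by split_ifs <;> rfl

lemma cnt_le {n : ℕ} (Xs : Fin n → Set W) (w : W) : cnt Xs w ≤ n := by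
  calc cnt Xs w ≤ ∑ _i : Fin n, 1 :=
        Finset.sum_le_sum (fun i _ => by split_ifs <;> simp)
    _ = n := by simp

lemma qgeval_range (μ : Set W → ℝ) (hr : ∀ X : Set W, μ X ∈ Set.Icc (0:ℝ) 1)
    (v : ℕ → Set W) (α : QGForm) : qgeval μ v α ∈ Set.Icc (0:ℝ) 1 := by
  induction α with
  | bel φ => exact hr _
  | and α β ihα ihβ =>
      simp only [qgeval]
      constructor
      · exact le_min ihα.1 ihβ.1
      · exact min_le_of_left_le ihα.2
  | or α β ihα ihβ =>
      simp only [qgeval]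
      constructor
      · exact le_max_of_le_left ihα.1
      · exact max_le ihα.2 ihβ.2
  | imp α β ihα ihβ =>
      simp only [qgeval, gimp]
      split_ifs
      · norm_num
      · exact ihβ
  | coimp α β ihα ihβ =>
      simp only [qgeval, gcoimp]
      split_ifs
      · norm_num
      · exact ihα

lemma gimp_eq_one_iff {a b : ℝ} (ha : a ≤ 1) : gimp a b = 1 ↔ a ≤ b := by
  unfold gimp
  split_ifs with h
  · simp [h]
  · constructor
    · intro hb; exact absurd (hb ▸ ha) h
    · intro hb; exact absurd hb h

lemma qgeval_qTop (μ : Set W → ℝ) (v : ℕ → Set W) : qgeval μ v qTop = 1 := by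
  simp [qTop, qgeval, gimp]

lemma qgeval_qBot (μ : Set W → ℝ) (v : ℕ → Set W) : qgeval μ v qBot = 0 := by
  simp [qBot, qgeval, gcoimp]

lemma qgeval_qDelta (μ : Set W → ℝ) (v : ℕ → Set W) (α : QGForm) :
    qgeval μ v (qDelta α) = if 1 ≤ qgeval μ v α then 1 else 0 := by
  have h1 : qgeval μ v (qTop.coimp α) = gcoimp 1 (qgeval μ v α) := by
    show gcoimp (qgeval μ v qTop) _ = _
    rw [qgeval_qTop]
  show gimp (qgeval μ v (qTop.coimp α)) (qgeval μ v qBot) = _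
  rw [h1, qgeval_qBot]
  unfold gcoimp gimp
  split_ifs with h h2 h3 <;> first | rfl | linarith

lemma qgeval_qDelta_eq_one_iff (μ : Set W → ℝ) (v : ℕ → Set W) (α : QGForm) :
    qgeval μ v (qDelta α) = 1 ↔ 1 ≤ qgeval μ v α := by
  rw [qgeval_qDelta]
  split_ifs with h <;> simp [h]

lemma qgeval_qDelta_01 (μ : Set W → ℝ) (v : ℕ → Set W) (α : QGForm) :
    qgeval μ v (qDelta α) = 0 ∨ qgeval μ v (qDelta α) = 1 := by
  rw [qgeval_qDelta]; split_ifs <;> simp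

lemma qgeval_qBigAnd_01 (μ : Set W → ℝ) (v : ℕ → Set W) (l : List QGForm)
    (h : ∀ α ∈ l, qgeval μ v α = 0 ∨ qgeval μ v α = 1) :
    (qgeval μ v (qBigAnd l) = 0 ∨ qgeval μ v (qBigAnd l) = 1) ∧
    (qgeval μ v (qBigAnd l) = 1 ↔ ∀ α ∈ l, qgeval μ v α = 1) := by
  induction l with
  | nil => simp [qBigAnd, qgeval_qTop]
  | cons α l ih =>
      obtain ⟨ih1, ih2⟩ := ih (fun β hβ => h β (List.mem_cons_of_mem _ hβ))
      have hα := h α (List.mem_cons_self)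
      have : qgeval μ v (qBigAnd (α :: l)) = min (qgeval μ v α) (qgeval μ v (qBigAnd l)) := rfl
      rw [this]
      rcases hα with hα | hα <;> rcases ih1 with h1 | h1 <;>
        simp [hα, h1, ih2.symm, List.forall_mem_cons]

lemma cpset_cpTop (v : ℕ → Set W) : cpset v cpTop = Set.univ := by
  ext w; simp [cpTop, cpBot, cpset]

lemma mem_cpBigAnd (v : ℕ → Set W) (l : List CPForm) (w : W) :
    w ∈ cpset v (cpBigAnd l) ↔ ∀ ψ ∈ l, w ∈ cpset v ψ := by
  induction l with
  | nil => simp [cpBigAnd, cpset_cpTop]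
  | cons φ l ih =>
      have : cpset v (cpBigAnd (φ :: l)) = cpset v φ ∩ cpset v (cpBigAnd l) := rfl
      simp [this, ih]

lemma mem_cpBigOr (v : ℕ → Set W) (l : List CPForm) (w : W) :
    w ∈ cpset v (cpBigOr l) ↔ ∃ ψ ∈ l, w ∈ cpset v ψ := by
  induction l with
  | nil => simp [cpBigOr, cpBot, cpset]
  | cons φ l ih =>
      have : cpset v (cpBigOr (φ :: l)) = ((cpset v φ)ᶜ ∩ (cpset v (cpBigOr l))ᶜ)ᶜ := rfl
      simp [this, ih]
      tauto

lemma mem_signed_iff (v : ℕ → Set W) {n : ℕ} (φ : Fin n → CPForm)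
    (K : Finset (Fin n)) (w : W) :
    (∀ k : Fin n, w ∈ cpset v (if k ∈ K then (φ k).neg else φ k)) ↔
      K = Finset.univ.filter (fun k => w ∉ cpset v (φ k)) := by
  constructor
  · intro h
    ext k
    simp only [Finset.mem_filter, Finset.mem_univ, true_and]
    constructor
    · intro hk
      have := h k
      rw [if_pos hk] at this
      exact this
    · intro hk
      by_contra hkK
      have := h k
      rw [if_neg hkK] at this
      exact hk this
  · rintro rfl k
    by_cases hw : w ∈ cpset v (φ k)
    · rw [if_neg (by simp [hw])]
      exact hw
    · rw [if_pos (by simp [hw])]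
      exact hw

lemma mem_EG (v : ℕ → Set W) {n : ℕ} (φ χ : Fin n → CPForm) (w : W) :
    w ∈ cpset v (cpBigOr (EGdisjuncts φ χ)) ↔
      cnt (fun i => cpset v (φ i)) w = cnt (fun i => cpset v (χ i)) w := by
  classical
  rw [mem_cpBigOr]
  have hmem : ∀ ψ, ψ ∈ EGdisjuncts φ χ ↔
      ∃ K L : Finset (Fin n), K.card = L.card ∧
        ψ = cpBigAnd
          ((List.ofFn fun k : Fin n => if k ∈ K then (φ k).neg else φ k) ++
           (List.ofFn fun l : Fin n => if l ∈ L then (χ l).neg else χ l)) := by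
    intro ψ
    simp only [EGdisjuncts, List.mem_map, Finset.mem_toList, Finset.mem_filter,
      Finset.mem_product, Finset.mem_powerset, Finset.subset_univ, true_and, Prod.exists]
    constructor
    · rintro ⟨K, L, hcard, rfl⟩
      exact ⟨K, L, hcard, rfl⟩
    · rintro ⟨K, L, hcard, rfl⟩
      exact ⟨K, L, hcard, rfl⟩
  have hdisj : ∀ (K L : Finset (Fin n)),
      (w ∈ cpset v (cpBigAnd
          ((List.ofFn fun k : Fin n => if k ∈ K then (φ k).neg else φ k) ++
           (List.ofFn fun l : Fin n => if l ∈ L then (χ l).neg else χ l)))) ↔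
        ((∀ k : Fin n, w ∈ cpset v (if k ∈ K then (φ k).neg else φ k)) ∧
         (∀ l : Fin n, w ∈ cpset v (if l ∈ L then (χ l).neg else χ l))) := by
    intro K L
    rw [mem_cpBigAnd]
    constructor
    · intro h
      constructor
      · intro k
        exact h _ (List.mem_append_left _ (List.mem_ofFn.mpr ⟨k, rfl⟩))
      · intro l
        exact h _ (List.mem_append_right _ (List.mem_ofFn.mpr ⟨l, rfl⟩))
    · rintro ⟨h1, h2⟩ ψ hψ
      rcases List.mem_append.mp hψ with h | h <;> obtain ⟨i, rfl⟩ := List.mem_ofFn.mp h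
      · exact h1 i
      · exact h2 i
  constructor
  · rintro ⟨ψ, hψ, hw⟩
    obtain ⟨K, L, hcard, rfl⟩ := (hmem ψ).mp hψ
    obtain ⟨h1, h2⟩ := (hdisj K L).mp hw
    rw [mem_signed_iff] at h1 h2
    subst h1; subst h2
    have hφ := Finset.card_filter_add_card_filter_not
      (s := (Finset.univ : Finset (Fin n))) (p := fun k => w ∈ cpset v (φ k))
    have hχ := Finset.card_filter_add_card_filter_not
      (s := (Finset.univ : Finset (Fin n))) (p := fun k => w ∈ cpset v (χ k))
    have e1 : cnt (fun i => cpset v (φ i)) w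
        = (Finset.univ.filter (fun k => w ∈ cpset v (φ k))).card := by
      rw [Finset.card_filter]; rfl
    have e2 : cnt (fun i => cpset v (χ i)) w
        = (Finset.univ.filter (fun k => w ∈ cpset v (χ k))).card := by
      rw [Finset.card_filter]; rfl
    simp only [Finset.card_univ, Fintype.card_fin] at hφ hχ
    omega
  · intro h
    set K := Finset.univ.filter (fun k => w ∉ cpset v (φ k)) with hK
    set L := Finset.univ.filter (fun l => w ∉ cpset v (χ l)) with hL
    have hcard : K.card = L.card := by
      have hφ := Finset.card_filter_add_card_filter_not
        (s := (Finset.univ : Finset (Fin n))) (p := fun k => w ∈ cpset v (φ k))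
      have hχ := Finset.card_filter_add_card_filter_not
        (s := (Finset.univ : Finset (Fin n))) (p := fun k => w ∈ cpset v (χ k))
      have e1 : cnt (fun i => cpset v (φ i)) w
          = (Finset.univ.filter (fun k => w ∈ cpset v (φ k))).card := by
        rw [Finset.card_filter]; rfl
      have e2 : cnt (fun i => cpset v (χ i)) w
          = (Finset.univ.filter (fun k => w ∈ cpset v (χ k))).card := by
        rw [Finset.card_filter]; rfl
      simp only [Finset.card_univ, Fintype.card_fin] at hφ hχ
      simp only [hK, hL]
      omega
    refine ⟨_, (hmem _).mpr ⟨K, L, hcard, rfl⟩, (hdisj K L).mpr ⟨?_, ?_⟩⟩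
    · rw [mem_signed_iff]
    · rw [mem_signed_iff]

lemma one_le_gimp_iff {a b : ℝ} (ha : a ≤ 1) (hb : b ≤ 1) : 1 ≤ gimp a b ↔ a ≤ b := by
  unfold gimp
  split_ifs with h
  · simp [h]
  · constructor
    · intro h1; linarith
    · intro h1; exact absurd h1 h

lemma KPS_eval_one (μ : Set W → ℝ) (hr : ∀ X : Set W, μ X ∈ Set.Icc (0:ℝ) 1)
    (v : ℕ → Set W) (m : ℕ) (φ χ : Fin (m+1) → CPForm) :
    qgeval μ v (KPSform m φ χ) = 1 ↔
      ((μ (cpset v (cpBigOr (EGdisjuncts φ χ))) = μ Set.univ ∧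
        ∀ j : Fin m, μ (cpset v (φ j.castSucc)) ≤ μ (cpset v (χ j.castSucc))) →
        μ (cpset v (χ (Fin.last m))) ≤ μ (cpset v (φ (Fin.last m)))) := by
  set eEG := qgeval μ v (EGform φ χ) with heEG
  set eBig := qgeval μ v (qBigAnd (List.ofFn fun i : Fin m =>
      qDelta ((QGForm.bel (φ i.castSucc)).imp (QGForm.bel (χ i.castSucc))))) with heBig
  set eC := qgeval μ v
      (qDelta ((QGForm.bel (χ (Fin.last m))).imp (QGForm.bel (φ (Fin.last m))))) with heC
  have hmain : qgeval μ v (KPSform m φ χ) = gimp (min eEG eBig) eC := rfl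
  -- characterization of eEG
  have hEG01 : eEG = 0 ∨ eEG = 1 := qgeval_qDelta_01 μ v _
  have hEGiff : eEG = 1 ↔
      μ (cpset v (cpBigOr (EGdisjuncts φ χ))) = μ Set.univ := by
    rw [heEG]
    show qgeval μ v (qDelta _) = 1 ↔ _
    rw [qgeval_qDelta_eq_one_iff]
    have hq : qgeval μ v (qIff (QGForm.bel (cpBigOr (EGdisjuncts φ χ))) (QGForm.bel cpTop))
        = min (gimp (μ (cpset v (cpBigOr (EGdisjuncts φ χ)))) (μ (cpset v cpTop)))
              (gimp (μ (cpset v cpTop)) (μ (cpset v (cpBigOr (EGdisjuncts φ χ))))) := rfl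
    rw [hq, cpset_cpTop, le_min_iff,
      one_le_gimp_iff (hr _).2 (hr _).2, one_le_gimp_iff (hr _).2 (hr _).2]
    rw [le_antisymm_iff]
  -- characterization of eBig
  have hlist : ∀ α ∈ (List.ofFn fun i : Fin m =>
      qDelta ((QGForm.bel (φ i.castSucc)).imp (QGForm.bel (χ i.castSucc)))),
      qgeval μ v α = 0 ∨ qgeval μ v α = 1 := by
    intro α hα
    obtain ⟨i, rfl⟩ := List.mem_ofFn.mp hα
    exact qgeval_qDelta_01 μ v _
  obtain ⟨hBig01, hBigiff⟩ := qgeval_qBigAnd_01 μ v _ hlist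
  rw [← heBig] at hBig01 hBigiff
  have hBigiff' : eBig = 1 ↔
      ∀ j : Fin m, μ (cpset v (φ j.castSucc)) ≤ μ (cpset v (χ j.castSucc)) := by
    rw [hBigiff]
    constructor
    · intro h j
      have := h _ (List.mem_ofFn.mpr ⟨j, rfl⟩)
      rw [qgeval_qDelta_eq_one_iff] at this
      have hq : qgeval μ v ((QGForm.bel (φ j.castSucc)).imp (QGForm.bel (χ j.castSucc)))
          = gimp (μ (cpset v (φ j.castSucc))) (μ (cpset v (χ j.castSucc))) := rfl
      rw [hq, one_le_gimp_iff (hr _).2 (hr _).2] at this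
      exact this
    · intro h α hα
      obtain ⟨j, rfl⟩ := List.mem_ofFn.mp hα
      rw [qgeval_qDelta_eq_one_iff]
      have hq : qgeval μ v ((QGForm.bel (φ j.castSucc)).imp (QGForm.bel (χ j.castSucc)))
          = gimp (μ (cpset v (φ j.castSucc))) (μ (cpset v (χ j.castSucc))) := rfl
      rw [hq, one_le_gimp_iff (hr _).2 (hr _).2]
      exact h j
  -- characterization of eC
  have hC01 : eC = 0 ∨ eC = 1 := qgeval_qDelta_01 μ v _
  have hCiff : eC = 1 ↔
      μ (cpset v (χ (Fin.last m))) ≤ μ (cpset v (φ (Fin.last m))) := by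
    rw [heC, qgeval_qDelta_eq_one_iff]
    have hq : qgeval μ v ((QGForm.bel (χ (Fin.last m))).imp (QGForm.bel (φ (Fin.last m))))
        = gimp (μ (cpset v (χ (Fin.last m)))) (μ (cpset v (φ (Fin.last m)))) := rfl
    rw [hq, one_le_gimp_iff (hr _).2 (hr _).2]
  rw [hmain]
  have hminle : min eEG eBig ≤ 1 := by
    rcases hEG01 with h | h <;> rw [h] <;> [exact min_le_of_left_le (by norm_num);
      exact min_le_of_left_le le_rfl]
  rw [gimp_eq_one_iff hminle]
  constructor
  · rintro h ⟨h1, h2⟩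
    rw [← hEGiff] at h1
    rw [← hBigiff'] at h2
    rw [h1, h2] at h
    simp only [min_self] at h
    rcases hC01 with hc | hc
    · rw [hc] at h; norm_num at h
    · exact hCiff.mp hc
  · intro h
    by_cases hp : μ (cpset v (cpBigOr (EGdisjuncts φ χ))) = μ Set.univ ∧
        ∀ j : Fin m, μ (cpset v (φ j.castSucc)) ≤ μ (cpset v (χ j.castSucc))
    · have hc := hCiff.mpr (h hp)
      rw [hc]
      exact hminle
    · have : eEG = 0 ∨ eBig = 0 := by
        rcases hEG01 with h0 | h1
        · exact Or.inl h0
        · rcases hBig01 with h0' | h1'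
          · exact Or.inr h0'
          · exact absurd ⟨hEGiff.mp h1, hBigiff'.mp h1'⟩ hp
      have hC0 : 0 ≤ eC := by
        rcases hC01 with hc | hc <;> rw [hc] <;> norm_num
      rcases this with h0 | h0
      · calc min eEG eBig ≤ eEG := min_le_left _ _
          _ ≤ eC := by rw [h0]; exact hC0
      · calc min eEG eBig ≤ eBig := min_le_right _ _
          _ ≤ eC := by rw [h0]; exact hC0

lemma sum_ite_lt (n d : ℕ) (hd : d ≤ n) :
    (∑ k : Fin n, if (k : ℕ) < d then 1 else 0) = d := by
  rw [Fin.sum_univ_eq_sum_range (fun k => if k < d then 1 else 0)]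
  rw [← Finset.card_filter]
  have : (Finset.range n).filter (fun k => k < d) = Finset.range d := by
    ext k
    simp only [Finset.mem_filter, Finset.mem_range]
    omega
  rw [this, Finset.card_range]

lemma null_of_subset_compl (μ : Set W → ℝ) (hkps : muKPS μ) (hmono : Monotone μ)
    (U P : Set W) (hU : μ U = μ Set.univ) (hP : P ⊆ Uᶜ) : μ P ≤ μ ∅ := by
  have h := hkps 2 ![U ∪ P, U ∪ P, ∅] ![U ∪ P, U, P] ?_ ?_
  · have e1 : (![U ∪ P, U ∪ P, ∅] : Fin 3 → Set W) (Fin.last 2) = ∅ := rfl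
    have e2 : (![U ∪ P, U, P] : Fin 3 → Set W) (Fin.last 2) = P := rfl
    rw [e1, e2] at h
    exact h
  · intro j
    fin_cases j
    · exact le_rfl
    · show μ (U ∪ P) ≤ μ U
      calc μ (U ∪ P) ≤ μ Set.univ := hmono (Set.subset_univ _)
        _ = μ U := hU.symm
  · intro w
    rw [natCard_eq_cnt, natCard_eq_cnt]
    unfold cnt
    rw [Fin.sum_univ_three, Fin.sum_univ_three]
    by_cases hw1 : w ∈ U <;> by_cases hw2 : w ∈ P
    · exact absurd hw1 (hP hw2)
    · simp [hw1, hw2, Set.mem_union]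
    · simp [hw1, hw2, Set.mem_union]
    · simp [hw1, hw2, Set.mem_union]

lemma cnt_snoc_append (m : ℕ) (C R : Fin (m + 1) → Set W) (w : W) :
    cnt (Fin.snoc (Fin.append (fun j : Fin m => C j.castSucc) R)
      (C (Fin.last m)) : Fin (m + (m + 1) + 1) → Set W) w = cnt C w + cnt R w := by
  unfold cnt
  rw [Fin.sum_univ_castSucc]
  simp only [Fin.snoc_castSucc, Fin.snoc_last]
  rw [Fin.sum_univ_add]
  simp only [Fin.append_left, Fin.append_right]
  rw [Fin.sum_univ_castSucc (f := fun i : Fin (m + 1) => if w ∈ C i then 1 else 0)]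
  ring

end Aux

/-- an uncertainty frame validates all instances of the schemas
`KPS_m` (`m ∈ ℕ`) iff `μ` satisfies the Kraft–Pratt–Seidenberg conditions `μKPS_m`
for all `m ∈ ℕ`. -/
theorem KPS_correspondence (W : Type) (_ : Nonempty W) (μ : Set W → ℝ)
    (hμ : IsUncertainty μ) :
    (∀ (m : ℕ) (φ χ : Fin (m + 1) → CPForm), QGValidOnFrame μ (KPSform m φ χ)) ↔
      muKPS μ := by
  obtain ⟨hr, hmono, hnontriv⟩ := hμ
  constructor
  · -- validity implies muKPS
    intro hvalid m X Y hle hcount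
    classical
    set φ : Fin (m + 1) → CPForm := fun i => CPForm.atom i.val with hφ
    set χ : Fin (m + 1) → CPForm := fun i => CPForm.atom (m + 1 + i.val) with hχ
    set v : ℕ → Set W := fun k =>
      if h : k < m + 1 then X ⟨k, h⟩
      else if h2 : k - (m + 1) < m + 1 then Y ⟨k - (m + 1), h2⟩ else ∅ with hv
    have hX : ∀ i : Fin (m + 1), cpset v (φ i) = X i := by
      intro i
      show v i.val = X i
      simp only [hv]
      simp only [i.isLt, dif_pos, Fin.eta]
    have hY : ∀ i : Fin (m + 1), cpset v (χ i) = Y i := by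
      intro i
      show v (m + 1 + i.val) = Y i
      rw [hv]
      have h1 : ¬ (m + 1 + i.val < m + 1) := by omega
      have h2 : m + 1 + i.val - (m + 1) = i.val := by omega
      simp only [hv]
      rw [dif_neg h1]
      simp only [h2, i.isLt, dif_pos, Fin.eta]
    have hval := (KPS_eval_one μ hr v m φ χ).mp (hvalid m φ χ v)
    have hpre : μ (cpset v (cpBigOr (EGdisjuncts φ χ))) = μ Set.univ ∧
        ∀ j : Fin m, μ (cpset v (φ j.castSucc)) ≤ μ (cpset v (χ j.castSucc)) := by
      constructor
      · congr 1
        ext w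
        simp only [Set.mem_univ, iff_true]
        rw [mem_EG]
        have eX : (fun i => cpset v (φ i)) = X := funext hX
        have eY : (fun i => cpset v (χ i)) = Y := funext hY
        rw [eX, eY, ← natCard_eq_cnt, ← natCard_eq_cnt]
        exact hcount w
      · intro j
        rw [hX, hY]
        exact hle j
    have := hval hpre
    rw [hX, hY] at this
    exact this
  · -- muKPS implies validity
    intro hkps m φ χ v
    rw [KPS_eval_one μ hr v m φ χ]
    rintro ⟨hEG, hle⟩
    classical
    set A : Fin (m + 1) → Set W := fun i => cpset v (φ i) with hA
    set B : Fin (m + 1) → Set W := fun i => cpset v (χ i) with hB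
    set U : Set W := cpset v (cpBigOr (EGdisjuncts φ χ)) with hU
    have hmemU : ∀ w, w ∈ U ↔ cnt A w = cnt B w := fun w => mem_EG v φ χ w
    have hnull : ∀ S : Set W, S ⊆ Uᶜ → μ S ≤ μ ∅ := fun S hS =>
      null_of_subset_compl μ hkps hmono U S hEG hS
    set P : Fin (m + 1) → Set W := fun k => {w | cnt A w + (k.val + 1) ≤ cnt B w} with hPdef
    set Q : Fin (m + 1) → Set W := fun k => {w | cnt B w + (k.val + 1) ≤ cnt A w} with hQdef
    have hfin := hkps (m + (m + 1))
      (Fin.snoc (Fin.append (fun j : Fin m => A j.castSucc) P) (A (Fin.last m)))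
      (Fin.snoc (Fin.append (fun j : Fin m => B j.castSucc) Q) (B (Fin.last m)))
      ?_ ?_
    · rw [Fin.snoc_last, Fin.snoc_last] at hfin
      exact hfin
    · -- premises
      intro j
      rw [Fin.snoc_castSucc, Fin.snoc_castSucc]
      refine Fin.addCases (motive := fun j => μ (Fin.append (fun j : Fin m => A j.castSucc) P j)
          ≤ μ (Fin.append (fun j : Fin m => B j.castSucc) Q j)) ?_ ?_ j
      · intro i
        rw [Fin.append_left, Fin.append_left]
        exact hle i
      · intro k
        rw [Fin.append_right, Fin.append_right]
        have hPk : P k ⊆ Uᶜ := by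
          intro w hw
          rw [hPdef] at hw
          simp only [Set.mem_setOf_eq] at hw
          intro hwU
          rw [hmemU] at hwU
          omega
        calc μ (P k) ≤ μ ∅ := hnull _ hPk
          _ ≤ μ (Q k) := hmono (Set.empty_subset _)
    · -- counts
      intro w
      rw [natCard_eq_cnt, natCard_eq_cnt, cnt_snoc_append, cnt_snoc_append]
      have hP : cnt P w = cnt B w - cnt A w := by
        calc cnt P w
            = ∑ k : Fin (m + 1), if (k : ℕ) < cnt B w - cnt A w then 1 else 0 := by
              refine Finset.sum_congr rfl fun k _ => ?_
              have hiff : w ∈ P k ↔ (k : ℕ) < cnt B w - cnt A w := by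
                rw [hPdef]
                simp only [Set.mem_setOf_eq]
                omega
              by_cases h : (k : ℕ) < cnt B w - cnt A w
              · rw [if_pos (hiff.mpr h), if_pos h]
              · rw [if_neg (fun hw => h (hiff.mp hw)), if_neg h]
          _ = cnt B w - cnt A w := sum_ite_lt _ _ (by have := cnt_le B w; omega)
      have hQ : cnt Q w = cnt A w - cnt B w := by
        calc cnt Q w
            = ∑ k : Fin (m + 1), if (k : ℕ) < cnt A w - cnt B w then 1 else 0 := by
              refine Finset.sum_congr rfl fun k _ => ?_
              have hiff : w ∈ Q k ↔ (k : ℕ) < cnt A w - cnt B w := by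
                rw [hQdef]
                simp only [Set.mem_setOf_eq]
                omega
              by_cases h : (k : ℕ) < cnt A w - cnt B w
              · rw [if_pos (hiff.mpr h), if_pos h]
              · rw [if_neg (fun hw => h (hiff.mp hw)), if_neg h]
          _ = cnt A w - cnt B w := sum_ite_lt _ _ (by have := cnt_le A w; omega)
      rw [hP, hQ]
      omega
end
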